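/- arXiv:1611.08120 — 6 statements merged into one kernel-verified Lean document; each statement's English description precedes it below -/
import Mathlib

section
/- Let p be an odd prime such that the Pisano period l_p equals p−1 and β(p) = 1. Then in F_p[x] the greatest common divisor of the Fibonacci polynomial f(x) and x^{p−1} − 1 equals (x^{p−1} − 1)/(x² + x − 1); in particular x² + x − 1 divides x^{p−1} − 1 in F_p[x]. -/
open Polynomial

/-- The Fibonacci sequence over `ZMod p`: `F 0 = 0`, `F 1 = 1`, `F (n+2) = F (n+1) + F n`. -/
def fibMod (p : ℕ) : ℕ → ZMod p
  | 0 => 0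
  | 1 => 1
  | n + 2 => fibMod p (n + 1) + fibMod p n

/-- The Pisano period of `p`: the least `t > 0` with `F t = F 0 = 0` and `F (t+1) = F 1 = 1`. -/
noncomputable def pisano (p : ℕ) : ℕ :=
  sInf {t : ℕ | 0 < t ∧ fibMod p t = 0 ∧ fibMod p (t + 1) = 1}

/-- `β(p)`: the number of indices `0 ≤ i < l_p` with `F i = 0` in `ZMod p`. -/
noncomputable def betaP (p : ℕ) : ℕ :=
  ((Finset.range (pisano p)).filter fun i => fibMod p i = 0).card

/-- The Fibonacci polynomial `f(x) = ∑_{i=0}^{l_p - 1} F_i x^i` over `ZMod p`. -/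
noncomputable def fibPoly (p : ℕ) : (ZMod p)[X] :=
  ∑ i ∈ Finset.range (pisano p), C (fibMod p i) * X ^ i

/-- Cyclic shift of a vector of length `l`: the shift `v ↦ (v_{l-1}, v_0, …, v_{l-2})`,
which corresponds to multiplication by `x` modulo `x^l - 1` on coefficient vectors. -/
def cyclicShift (p l : ℕ) (v : Fin l → ZMod p) : Fin l → ZMod p :=
  fun i => v ⟨((i : ℕ) + (l - 1)) % l, Nat.mod_lt _ i.pos⟩

/-- The coefficient vector of length `l` of a polynomial. -/
def polyVec (p l : ℕ) (g : (ZMod p)[X]) : Fin l → ZMod p := fun i => g.coeff i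

/-- The cyclic code of length `l` generated by `g`: the ideal generated by the image of `g`
in `F_p[x]/(x^l - 1)`, identified with the subspace of `F_p^l` of coefficient vectors via
`a_0 + a_1 x + ⋯ + a_{l-1} x^{l-1} ↦ (a_0, …, a_{l-1})`; equivalently (since multiplication
by `x` is the cyclic shift), the `F_p`-span of all cyclic shifts of the coefficient vector
of `g`. -/
noncomputable def cyclicCode (p l : ℕ) (g : (ZMod p)[X]) :
    Submodule (ZMod p) (Fin l → ZMod p) :=
  Submodule.span (ZMod p) {w | ∃ k : ℕ, w = (cyclicShift p l)^[k] (polyVec p l g)}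

/-- The cyclic code of length `l` generated by the Fibonacci polynomial `f(x)`. -/
noncomputable def fibCode (p l : ℕ) : Submodule (ZMod p) (Fin l → ZMod p) :=
  cyclicCode p l (fibPoly p)

lemma fib_key (p : ℕ) : ∀ n, 1 ≤ n →
    (X ^ 2 + X - 1 : (ZMod p)[X]) * ∑ i ∈ Finset.range (n + 1), C (fibMod p i) * X ^ i
      = C (fibMod p n) * X ^ (n + 2) + C (fibMod p (n + 1)) * X ^ (n + 1) - X := by
  intro n hn
  induction n with
  | zero => omega
  | succ m ih =>
    rcases Nat.eq_or_lt_of_le hn with h | h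
    · have : m = 0 := by omega
      subst this
      simp [fibMod, Finset.sum_range_succ]
      ring
    · have hm : 1 ≤ m := by omega
      rw [Finset.sum_range_succ, mul_add, ih hm]
      have : fibMod p (m + 2) = fibMod p (m + 1) + fibMod p m := rfl
      rw [this, C_add]
      ring

/-- For an odd prime `p` with Pisano period `l_p = p - 1` and `β(p) = 1`,
the (monic) greatest common divisor of the Fibonacci polynomial `f(x)` and `x^{p-1} - 1`
in `F_p[x]` is `(x^{p-1} - 1)/(x² + x - 1)`; in particular `x² + x - 1` divides
`x^{p-1} - 1` in `F_p[x]`. -/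
theorem fibPoly_gcd (p : ℕ) [Fact p.Prime] (hodd : Odd p)
    (hl : pisano p = p - 1) (hb : betaP p = 1) :
    gcd (fibPoly p) (X ^ (p - 1) - 1 : (ZMod p)[X])
        = (X ^ (p - 1) - 1) / (X ^ 2 + X - 1) ∧
      (X ^ 2 + X - 1 : (ZMod p)[X]) ∣ (X ^ (p - 1) - 1) := by
  have hp : p.Prime := Fact.out
  have hp2 : p ≠ 2 := by rintro rfl; simp [Nat.odd_iff] at hodd
  have hp3 : 3 ≤ p := by have := hp.two_le; omega
  -- the Pisano period satisfies its defining property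
  have hS : pisano p ∈ {t : ℕ | 0 < t ∧ fibMod p t = 0 ∧ fibMod p (t + 1) = 1} := by
    apply Nat.sInf_mem
    rw [Set.nonempty_iff_ne_empty]
    intro h
    rw [pisano, h, Nat.sInf_empty] at hl
    omega
  rw [hl] at hS
  obtain ⟨-, hF0, hF1⟩ := hS
  obtain ⟨n, hn2⟩ : ∃ n, p - 1 = n + 2 := ⟨p - 3, by omega⟩
  rw [hn2] at hF0 hF1
  have hFn1 : fibMod p (n + 1) = 1 := by
    have h3 : fibMod p (n + 3) = fibMod p (n + 2) + fibMod p (n + 1) := rfl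
    rw [hF0, zero_add] at h3
    rw [← h3]; exact hF1
  -- the key polynomial identity
  have hgf : (X ^ 2 + X - 1 : (ZMod p)[X]) * fibPoly p = X * (X ^ (p - 1) - 1) := by
    rw [fibPoly, hl, hn2, show n + 2 = (n + 1) + 1 from rfl,
      fib_key p (n + 1) (by omega), hFn1, hF0]
    simp only [map_one, map_zero, one_mul, zero_mul]
    ring
  -- X divides fibPoly p
  have hc0 : (fibPoly p).coeff 0 = 0 := by
    rw [fibPoly, finset_sum_coeff]
    rw [Finset.sum_eq_single 0]
    · simp [fibMod]
    · intro b _ hb0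
      rw [coeff_C_mul, coeff_X_pow, if_neg (by omega), mul_zero]
    · intro h
      simp [hl, hn2] at h
  obtain ⟨f₁, hf₁⟩ := X_dvd_iff.mpr hc0
  have hXne : (X : (ZMod p)[X]) ≠ 0 := X_ne_zero
  have hgf1 : (X ^ 2 + X - 1 : (ZMod p)[X]) * f₁ = X ^ (p - 1) - 1 := by
    apply mul_left_cancel₀ hXne
    rw [← hgf, hf₁]; ring
  have hdvd : (X ^ 2 + X - 1 : (ZMod p)[X]) ∣ (X ^ (p - 1) - 1) := ⟨f₁, hgf1.symm⟩
  refine ⟨?_, hdvd⟩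
  -- monicity facts
  have hgm : (X ^ 2 + X - 1 : (ZMod p)[X]).Monic := by monicity!
  have hlm : (X ^ (p - 1) - 1 : (ZMod p)[X]).Monic := by
    have : (X ^ (p - 1) - 1 : (ZMod p)[X]) = X ^ (p - 1) - C 1 := by simp
    rw [this]
    exact monic_X_pow_sub_C 1 (by omega)
  have hf1m : f₁.Monic := hgm.of_mul_monic_left (by rw [hgf1]; exact hlm)
  -- gcd X (X^2+X-1) = 1
  have hcop : IsCoprime (X : (ZMod p)[X]) (X ^ 2 + X - 1) := ⟨X + 1, -1, by ring⟩
  have hgcd1 : gcd (X : (ZMod p)[X]) (X ^ 2 + X - 1) = 1 := by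
    rw [← normalize_gcd]
    exact normalize_eq_one.mpr ((gcd_isUnit_iff _ _).mpr hcop)
  -- compute the gcd
  have hgcd : gcd (fibPoly p) (X ^ (p - 1) - 1 : (ZMod p)[X]) = f₁ := by
    rw [hf₁, ← hgf1, mul_comm X f₁, mul_comm (X ^ 2 + X - 1 : (ZMod p)[X]) f₁,
      gcd_mul_left, hgcd1, mul_one, hf1m.normalize_eq_self]
  rw [hgcd, ← hgf1, mul_comm]
  exact (mul_div_cancel_right₀ f₁ hgm.ne_zero).symm
end

section
/- Let p be an odd prime such that the Pisano period l_p equals p−1 and β(p) = 2. Then the cyclic code C = ⟨f(x)⟩ of length p−1 over F_p generated by the Fibonacci polynomial f(x) has F_p-dimension 2 and minimum Hamming distance p−3. -/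
open Polynomial

lemma fibMod_add_two (p n : ℕ) : fibMod p (n+2) = fibMod p (n+1) + fibMod p n := rfl

lemma fib_add (p : ℕ) : ∀ n m : ℕ, fibMod p (m + n + 1) =
    fibMod p (m+1) * fibMod p (n+1) + fibMod p m * fibMod p n := by
  intro n
  induction n using Nat.strong_induction_on with
  | _ n ih =>
    match n with
    | 0 => intro m; simp [fibMod]
    | 1 => intro m; show fibMod p (m + 2) = _; rw [fibMod_add_two]; simp [fibMod]
    | n + 2 =>
      intro m
      have h1 := ih n (by omega) m
      have h2 := ih (n+1) (by omega) m
      have e : m + (n+2) + 1 = (m + n + 1) + 2 := by ring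
      have e2 : m + n + 1 + 1 = m + (n + 1) + 1 := by ring
      have a1 : fibMod p (n+1+1) = fibMod p (n+1) + fibMod p n := fibMod_add_two p n
      have a2 : fibMod p (n+2+1) = fibMod p (n+2) + fibMod p (n+1) := fibMod_add_two p (n+1)
      rw [e, fibMod_add_two, e2, h2, h1, a2, a1]
      ring

lemma fib_period (p l : ℕ) (hF0 : fibMod p l = 0) (hF1 : fibMod p (l+1) = 1) :
    ∀ n, fibMod p (n + l) = fibMod p n := by
  intro n
  cases n with
  | zero => simpa [fibMod] using hF0
  | succ k =>
    have h := fib_add p k l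
    rw [hF0, hF1] at h
    have e : k + 1 + l = l + k + 1 := by omega
    rw [e, h]
    ring

lemma fib_period_mul (p l : ℕ) (hF0 : fibMod p l = 0) (hF1 : fibMod p (l+1) = 1) :
    ∀ k n, fibMod p (n + l * k) = fibMod p n := by
  intro k
  induction k with
  | zero => intro n; simp
  | succ k ih =>
    intro n
    have e : n + l * (k + 1) = (n + l * k) + l := by ring
    rw [e, fib_period p l hF0 hF1, ih]

lemma fib_eq_mod (p l : ℕ) (hl0 : 0 < l) (hF0 : fibMod p l = 0) (hF1 : fibMod p (l+1) = 1)
    (n : ℕ) : fibMod p n = fibMod p (n % l) := by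
  conv_lhs => rw [← Nat.mod_add_div n l]
  exact fib_period_mul p l hF0 hF1 _ _

lemma fib_shift (p m : ℕ) (hm : fibMod p m = 0) :
    ∀ k, fibMod p (m + k) = fibMod p (m+1) * fibMod p k := by
  intro k
  cases k with
  | zero => simpa [fibMod] using hm
  | succ k =>
    have h := fib_add p k m
    rw [hm] at h
    have e : m + (k + 1) = m + k + 1 := rfl
    rw [e, h]
    ring

lemma fib_zero_iff (p l m : ℕ) [Fact p.Prime] (hm0 : 0 < m) (hml : m < l)
    (hFm : fibMod p m = 0) (hFm1 : fibMod p (m+1) ≠ 0)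
    (honly : ∀ i < l, fibMod p i = 0 → i = 0 ∨ i = m) :
    ∀ n, fibMod p n = 0 ↔ m ∣ n := by
  have step : ∀ n, fibMod p (n + m) = 0 ↔ fibMod p n = 0 := by
    intro n
    have h : fibMod p (m + n) = fibMod p (m+1) * fibMod p n := fib_shift p m hFm n
    rw [Nat.add_comm n m, h, mul_eq_zero]
    simp [hFm1]
  have modred : ∀ n, fibMod p n = 0 ↔ fibMod p (n % m) = 0 := by
    intro n
    induction n using Nat.strong_induction_on with
    | _ n ih =>
      by_cases h : n < m
      · rw [Nat.mod_eq_of_lt h]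
      · push_neg at h
        have e : n = (n - m) + m := by omega
        rw [e, step, ih (n - m) (by omega), Nat.add_mod_right]
  intro n
  rw [modred n]
  constructor
  · intro h
    have hlt : n % m < m := Nat.mod_lt _ hm0
    rcases honly (n % m) (by omega) h with h0 | h0
    · exact Nat.dvd_of_mod_eq_zero h0
    · omega
  · intro h
    obtain ⟨q, rfl⟩ := h
    rw [Nat.mul_mod_right]
    rfl

lemma G_add (p : ℕ) (s t : ZMod p) (a k : ℕ) :
    s * fibMod p (a+k+1) + t * fibMod p (a+k+2) =
      (s * fibMod p (a+1) + t * fibMod p (a+2)) * fibMod p (k+1) +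
      (s * fibMod p a + t * fibMod p (a+1)) * fibMod p k := by
  have e : a + k + 2 = (a+1) + k + 1 := by omega
  rw [fib_add p k a, e, fib_add p k (a+1)]
  ring

/-- For an odd prime `p` with Pisano period `l_p = p - 1` and `β(p) = 2`,
the cyclic code `C = ⟨f(x)⟩` of length `p - 1` over `F_p` has dimension `2` and minimum
Hamming distance `p - 3`. -/
theorem fibCode_beta_two (p : ℕ) [Fact p.Prime] (hodd : Odd p)
    (hl : pisano p = p - 1) (hb : betaP p = 2) :
    Module.finrank (ZMod p) (fibCode p (p - 1)) = 2 ∧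
      IsLeast {w : ℕ | ∃ v ∈ fibCode p (p - 1), v ≠ 0 ∧ hammingNorm v = w} (p - 3) := by
  classical
  have hp : p.Prime := Fact.out
  have hp3 : 3 ≤ p := by
    have h2 := hp.two_le
    obtain ⟨k, hk⟩ := hodd
    omega
  set l : ℕ := p - 1 with hldef
  have hl0 : 0 < l := by omega
  have hl2 : 2 ≤ l := by omega
  -- Pisano period properties
  have hne : {t : ℕ | 0 < t ∧ fibMod p t = 0 ∧ fibMod p (t + 1) = 1}.Nonempty := by
    by_contra h
    rw [Set.not_nonempty_iff_eq_empty] at h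
    have : pisano p = 0 := by rw [pisano, h]; simp
    omega
  have hmem : pisano p ∈ {t : ℕ | 0 < t ∧ fibMod p t = 0 ∧ fibMod p (t + 1) = 1} :=
    Nat.sInf_mem hne
  rw [hl] at hmem
  obtain ⟨-, hF0, hF1⟩ := hmem
  -- zero structure
  have hb' : ((Finset.range l).filter fun i => fibMod p i = 0).card = 2 := by
    rw [betaP, hl] at hb; exact hb
  have h0mem : (0 : ℕ) ∈ (Finset.range l).filter fun i => fibMod p i = 0 := by
    simp [Finset.mem_filter, hl0]
    rfl
  obtain ⟨m, hm0, hsfe⟩ : ∃ m, 0 < m ∧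
      ((Finset.range l).filter fun i => fibMod p i = 0) = {0, m} := by
    obtain ⟨x, y, hxy, hs⟩ := Finset.card_eq_two.mp hb'
    rw [hs] at h0mem
    simp only [Finset.mem_insert, Finset.mem_singleton] at h0mem
    rcases h0mem with rfl | rfl
    · exact ⟨y, Nat.pos_of_ne_zero (fun h => hxy h.symm), hs⟩
    · exact ⟨x, Nat.pos_of_ne_zero (fun h => hxy h), by rw [hs, Finset.pair_comm]⟩
  have hml : m < l := by
    have : m ∈ (Finset.range l).filter fun i => fibMod p i = 0 := by
      rw [hsfe]; simp
    simpa using (Finset.mem_filter.mp this).1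
  have hFm : fibMod p m = 0 := by
    have : m ∈ (Finset.range l).filter fun i => fibMod p i = 0 := by
      rw [hsfe]; simp
    exact (Finset.mem_filter.mp this).2
  have honly : ∀ i < l, fibMod p i = 0 → i = 0 ∨ i = m := by
    intro i hi hFi
    have : i ∈ (Finset.range l).filter fun i => fibMod p i = 0 :=
      Finset.mem_filter.mpr ⟨Finset.mem_range.mpr hi, hFi⟩
    rw [hsfe] at this
    simpa using this
  have hFm1 : fibMod p (m+1) ≠ 0 := by
    intro h0
    have allz : ∀ k, fibMod p (m + k) = 0 ∧ fibMod p (m + k + 1) = 0 := by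
      intro k
      induction k with
      | zero => exact ⟨hFm, h0⟩
      | succ k ih =>
        refine ⟨ih.2, ?_⟩
        have e : m + (k+1) + 1 = (m + k) + 2 := by omega
        rw [e, fibMod_add_two, ih.1, ih.2, add_zero]
    have : fibMod p (l + 1) = 0 := by
      have e : l + 1 = m + (l + 1 - m) := by omega
      rw [e]; exact (allz _).1
    rw [hF1] at this
    exact one_ne_zero this
  have hzero := fib_zero_iff p l m hm0 hml hFm hFm1 honly
  have hl2m : l = 2 * m := by
    obtain ⟨c, hc⟩ := (hzero l).mp hF0
    have h2m : ¬ (2 * m < l) := by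
      intro h2
      rcases honly (2*m) h2 ((hzero (2*m)).mpr ⟨2, by ring⟩) with h | h <;> omega
    have hc2 : 2 ≤ c := by
      rcases c with _ | _ | c
      · omega
      · omega
      · omega
    have : m * 2 ≤ m * c := Nat.mul_le_mul_left m hc2
    omega
  -- the two basis vectors
  set v : Fin l → ZMod p := fun i => fibMod p i with hvdef
  set w : Fin l → ZMod p := fun i => fibMod p (i + 1) with hwdef
  have hpvec : polyVec p l (fibPoly p) = v := by
    funext i
    simp only [polyVec, fibPoly, hl, Polynomial.finset_sum_coeff, Polynomial.coeff_C_mul,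
      Polynomial.coeff_X_pow, mul_ite, mul_one, mul_zero, Finset.sum_ite_eq',
      Finset.mem_range, i.isLt, if_true, hvdef, Finset.sum_ite_eq]
  set u : ℕ → Fin l → ZMod p := fun t i => fibMod p (i + t) with hudef
  have hu0 : u 0 = v := by funext i; simp [hudef, hvdef]
  have hperiod := fib_period p l hF0 hF1
  have hmod := fib_eq_mod p l hl0 hF0 hF1
  have hshift : ∀ t, cyclicShift p l (u t) = u (t + (l-1)) := by
    intro t
    funext i
    show fibMod p ((((i : ℕ) + (l - 1)) % l : ℕ) + t) = fibMod p ((i : ℕ) + (t + (l-1)))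
    rw [hmod (((i : ℕ) + (l - 1)) % l + t), Nat.mod_add_mod,
      hmod ((i : ℕ) + (t + (l-1)))]
    congr 2
    omega
  have hupow : ∀ k, (cyclicShift p l)^[k] v = u (k * (l-1)) := by
    intro k
    induction k with
    | zero => simp [hu0]
    | succ k ih =>
      rw [Function.iterate_succ_apply', ih, hshift]
      congr 1
      ring
  have humod : ∀ t, u t = u (t % l) := by
    intro t
    funext i
    show fibMod p ((i : ℕ) + t) = fibMod p ((i : ℕ) + t % l)
    rw [hmod ((i : ℕ) + t), hmod ((i : ℕ) + t % l), Nat.add_mod_mod]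
  have hudecomp : ∀ t, u t = fibMod p t • w + fibMod p (t + (l-1)) • v := by
    intro t
    funext i
    show fibMod p ((i : ℕ) + t) =
      fibMod p t * fibMod p ((i : ℕ) + 1) + fibMod p (t + (l-1)) * fibMod p (i : ℕ)
    have h := fib_add p (i : ℕ) (t + (l-1))
    have e1 : t + (l - 1) + 1 = t + l := by omega
    have e2 : t + (l-1) + (i:ℕ) + 1 = ((i:ℕ) + t) + l := by omega
    rw [e1, e2] at h
    rw [hperiod ((i:ℕ) + t), hperiod t] at h
    exact h
  have hwu : w = u 1 := by funext i; rfl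
  have hw_shift : w = (cyclicShift p l)^[l-1] v := by
    rw [hupow, humod]
    obtain ⟨k, hk⟩ : ∃ k, l = k + 2 := ⟨l - 2, by omega⟩
    have e : (l-1) * (l-1) = l * (l-2) + 1 := by
      rw [hk]
      simp only [show ∀ k : ℕ, k + 2 - 1 = k + 1 from fun k => rfl,
        show ∀ k : ℕ, k + 2 - 2 = k from fun k => rfl]
      ring
    rw [hwu, e, Nat.mul_add_mod, Nat.mod_eq_of_lt (by omega : 1 < l)]
  have hcode : fibCode p l = Submodule.span (ZMod p) {v, w} := by
    apply le_antisymm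
    · rw [fibCode, cyclicCode]
      apply Submodule.span_le.mpr
      rintro x ⟨k, rfl⟩
      rw [hpvec, hupow, hudecomp]
      exact Submodule.add_mem _
        (Submodule.smul_mem _ _ (Submodule.subset_span (by simp)))
        (Submodule.smul_mem _ _ (Submodule.subset_span (by simp)))
    · apply Submodule.span_le.mpr
      rintro x hx
      rcases hx with rfl | rfl
      · exact Submodule.subset_span ⟨0, by simp [hpvec]⟩
      · exact Submodule.subset_span ⟨l-1, by rw [hpvec, ← hw_shift]⟩
  have hF1v : fibMod p 1 = 1 := rfl
  have hF2v : fibMod p 2 = 1 := by rw [fibMod_add_two]; simp [fibMod]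
  have hli : LinearIndependent (ZMod p) ![v, w] := by
    rw [LinearIndependent.pair_iff]
    intro s t h
    have h0 := congr_fun h ⟨0, hl0⟩
    have h1 := congr_fun h ⟨1, by omega⟩
    simp only [Pi.add_apply, Pi.smul_apply, smul_eq_mul, Pi.zero_apply, hvdef, hwdef] at h0 h1
    norm_num at h0 h1
    rw [show fibMod p 0 = 0 from rfl, hF1v, mul_zero, zero_add, mul_one] at h0
    rw [hF1v, hF2v, mul_one, mul_one] at h1
    rw [h0, add_zero] at h1
    exact ⟨h1, h0⟩
  have hrange : Set.range ![v, w] = {v, w} := by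
    ext x
    simp [Fin.exists_fin_two, or_comm]
  -- the weight bound
  have hweight : ∀ s t : ZMod p, ¬(s = 0 ∧ t = 0) →
      (Finset.univ.filter fun i : Fin l => s * fibMod p (i:ℕ) + t * fibMod p ((i:ℕ)+1) = 0).card ≤ 2 := by
    intro s t hst
    set G : ℕ → ZMod p := fun n => s * fibMod p n + t * fibMod p (n+1) with hGdef
    have hGrec : ∀ n, G (n+2) = G (n+1) + G n := by
      intro n
      show s * fibMod p (n+2) + t * fibMod p (n+2+1) = G (n+1) + G n
      rw [show n+2+1 = (n+1)+2 from rfl, fibMod_add_two p (n+1), fibMod_add_two p n]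
      show _ = (s * fibMod p (n+1) + t * fibMod p (n+1+1)) + (s * fibMod p n + t * fibMod p (n+1))
      rw [show (n+1)+1 = n+2 from rfl, fibMod_add_two p n]
      ring
    have hGadd : ∀ a k, G (a + k + 1) = G (a+1) * fibMod p (k+1) + G a * fibMod p k := by
      intro a k
      show s * fibMod p (a+k+1) + t * fibMod p (a+k+1+1) = _
      rw [show a+k+1+1 = a+k+2 from rfl]
      exact G_add p s t a k
    have hGper : ∀ n, G (n + l) = G n := by
      intro n
      show s * fibMod p (n+l) + t * fibMod p (n+l+1) = s * fibMod p n + t * fibMod p (n+1)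
      rw [hperiod n, show n+l+1 = (n+1)+l from by omega, hperiod (n+1)]
    have hGpm : ∀ k n, G (n + l * k) = G n := by
      intro k
      induction k with
      | zero => intro n; simp
      | succ k ih =>
        intro n
        rw [show n + l*(k+1) = (n + l*k) + l from by ring, hGper, ih]
    by_cases hZ : ∀ i : Fin l, G (i:ℕ) ≠ 0
    · have he : (Finset.univ.filter fun i : Fin l =>
          s * fibMod p (i:ℕ) + t * fibMod p ((i:ℕ)+1) = 0) = ∅ := by
        apply Finset.filter_eq_empty_iff.mpr
        intro i _
        exact hZ i
      rw [he]
      simp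
    · push_neg at hZ
      obtain ⟨i₀, hi₀⟩ := hZ
      have hG1 : G ((i₀:ℕ) + 1) ≠ 0 := by
        intro h1
        have allz : ∀ k, G ((i₀:ℕ) + k) = 0 ∧ G ((i₀:ℕ) + k + 1) = 0 := by
          intro k
          induction k with
          | zero => exact ⟨hi₀, h1⟩
          | succ k ih =>
            refine ⟨ih.2, ?_⟩
            rw [show (i₀:ℕ) + (k+1) + 1 = ((i₀:ℕ) + k) + 2 from by omega, hGrec, ih.1, ih.2,
              add_zero]
        have hzall : ∀ n, G n = 0 := by
          intro n
          have hK : (i₀:ℕ) ≤ l * ((i₀:ℕ) + 1) := by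
            calc (i₀:ℕ) ≤ (i₀:ℕ) + 1 := by omega
            _ = 1 * ((i₀:ℕ)+1) := by ring
            _ ≤ l * ((i₀:ℕ)+1) := Nat.mul_le_mul_right _ hl0
          have h2 := (allz (n + l * ((i₀:ℕ)+1) - (i₀:ℕ))).1
          rw [show (i₀:ℕ) + (n + l * ((i₀:ℕ)+1) - (i₀:ℕ)) = n + l * ((i₀:ℕ)+1) from by omega,
            hGpm] at h2
          exact h2
        have ht : t = 0 := by
          have h00 := hzall 0
          simp only [hGdef] at h00
          rw [show fibMod p 0 = 0 from rfl, show (0+1 : ℕ) = 1 from rfl, hF1v, mul_zero,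
            zero_add, mul_one] at h00
          exact h00
        have hs : s = 0 := by
          have h01 := hzall 1
          simp only [hGdef] at h01
          rw [hF1v, show (1+1:ℕ) = 2 from rfl, hF2v, mul_one, mul_one, ht, add_zero] at h01
          exact h01
        exact hst ⟨hs, ht⟩
      have key : ∀ i : Fin l, G (i:ℕ) = 0 → (i:ℕ) % m = (i₀:ℕ) % m := by
        intro i hGi
        have hper' : G ((i:ℕ) + l * ((i₀:ℕ)+1)) = 0 := by rw [hGpm]; exact hGi
        have hKi : (i₀:ℕ) + 1 ≤ l * ((i₀:ℕ)+1) := by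
          calc (i₀:ℕ) + 1 = 1 * ((i₀:ℕ)+1) := by ring
          _ ≤ l * ((i₀:ℕ)+1) := Nat.mul_le_mul_right _ hl0
        have hni : (i₀:ℕ) + 1 ≤ (i:ℕ) + l * ((i₀:ℕ)+1) := by omega
        have hrep : (i:ℕ) + l * ((i₀:ℕ)+1) =
            (i₀:ℕ) + ((i:ℕ) + l * ((i₀:ℕ)+1) - (i₀:ℕ) - 1) + 1 := by omega
        have h4 := hGadd (i₀:ℕ) ((i:ℕ) + l * ((i₀:ℕ)+1) - (i₀:ℕ) - 1)
        rw [← hrep, hper', hi₀, zero_mul, add_zero] at h4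
        have h5 : fibMod p (((i:ℕ) + l * ((i₀:ℕ)+1) - (i₀:ℕ) - 1) + 1) = 0 := by
          rcases mul_eq_zero.mp h4.symm with h | h
          · exact absurd h hG1
          · exact h
        rw [show ((i:ℕ) + l * ((i₀:ℕ)+1) - (i₀:ℕ) - 1) + 1 =
          (i:ℕ) + l * ((i₀:ℕ)+1) - (i₀:ℕ) from by omega] at h5
        obtain ⟨q, hq⟩ := (hzero _).mp h5
        have hq' : (i:ℕ) + l * ((i₀:ℕ)+1) = (i₀:ℕ) + m * q := by omega
        have hx : ∀ x : ℕ, l * x = m * (2 * x) := by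
          intro x
          rw [hl2m]
          ring
        have e2 : (i:ℕ) + m * (2 * ((i₀:ℕ)+1)) = (i₀:ℕ) + m * q := by
          rw [← hq', hx]
        calc (i:ℕ) % m = ((i:ℕ) + m * (2*((i₀:ℕ)+1))) % m := by rw [Nat.add_mul_mod_self_left]
        _ = ((i₀:ℕ) + m * q) % m := by rw [e2]
        _ = (i₀:ℕ) % m := by rw [Nat.add_mul_mod_self_left]
      have hmlt : (i₀:ℕ) % m < m := Nat.mod_lt _ hm0
      have hsub : (Finset.univ.filter fun i : Fin l =>
            s * fibMod p (i:ℕ) + t * fibMod p ((i:ℕ)+1) = 0)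
          ⊆ {⟨(i₀:ℕ) % m, by omega⟩, ⟨(i₀:ℕ) % m + m, by omega⟩} := by
        intro i hi
        have hGi : G (i:ℕ) = 0 := (Finset.mem_filter.mp hi).2
        have hk := key i hGi
        have hil : (i:ℕ) < l := i.isLt
        simp only [Finset.mem_insert, Finset.mem_singleton, Fin.ext_iff]
        rcases Nat.lt_or_ge (i:ℕ) m with h | h
        · left
          rw [Nat.mod_eq_of_lt h] at hk
          exact hk
        · right
          have h2 : (i:ℕ) % m = (i:ℕ) - m := by
            rw [Nat.mod_eq_sub_mod h, Nat.mod_eq_of_lt (by omega)]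
          omega
      calc (Finset.univ.filter fun i : Fin l =>
            s * fibMod p (i:ℕ) + t * fibMod p ((i:ℕ)+1) = 0).card
          ≤ ({⟨(i₀:ℕ) % m, by omega⟩, ⟨(i₀:ℕ) % m + m, by omega⟩} : Finset (Fin l)).card :=
            Finset.card_le_card hsub
      _ ≤ 2 := by
          apply le_trans (Finset.card_insert_le _ _)
          simp
  constructor
  · rw [hcode, ← hrange, finrank_span_eq_card hli]
    simp
  · constructor
    · refine ⟨v, ?_, ?_, ?_⟩
      · rw [hcode]
        exact Submodule.subset_span (by simp)
      · intro h
        have h1 := congr_fun h ⟨1, by omega⟩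
        simp only [hvdef, Pi.zero_apply] at h1
        have h2 : fibMod p 1 = 0 := h1
        rw [hF1v] at h2
        exact one_ne_zero h2
      · have hzeq : (Finset.univ.filter fun i : Fin l => v i = 0) = {⟨0, hl0⟩, ⟨m, hml⟩} := by
          ext i
          simp only [Finset.mem_filter, Finset.mem_univ, true_and, Finset.mem_insert,
            Finset.mem_singleton, Fin.ext_iff, hvdef]
          constructor
          · intro h
            obtain ⟨q, hq⟩ := (hzero (i:ℕ)).mp h
            have hiq : (i:ℕ) < l := i.isLt
            have hq2 : q < 2 := by
              by_contra hq2
              push_neg at hq2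
              have : m * 2 ≤ m * q := Nat.mul_le_mul_left m hq2
              omega
            have hq01 : q = 0 ∨ q = 1 := by omega
            rcases hq01 with rfl | rfl
            · left; simpa using hq
            · right; simpa using hq
          · rintro (h | h)
            · rw [show (i:ℕ) = 0 from by simpa using h]
              rfl
            · rw [show (i:ℕ) = m from by simpa using h]
              exact hFm
        have hcards : (Finset.univ.filter fun i : Fin l => v i = 0).card = 2 := by
          rw [hzeq, Finset.card_insert_of_notMem, Finset.card_singleton]
          simp only [Finset.mem_singleton, Fin.ext_iff]
          omega
        have htot := Finset.card_filter_add_card_filter_not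
          (s := (Finset.univ : Finset (Fin l))) (fun i => v i = 0)
        rw [Finset.card_univ, Fintype.card_fin] at htot
        have hnv : hammingNorm v = (Finset.univ.filter fun i : Fin l => ¬ (v i = 0)).card := by
          simp only [hammingNorm, ne_eq]
        rw [hnv]
        omega
    · rintro x ⟨c, hc, hc0, rfl⟩
      rw [hcode] at hc
      obtain ⟨s, t, rfl⟩ := Submodule.mem_span_pair.mp hc
      have hst : ¬ (s = 0 ∧ t = 0) := by
        rintro ⟨rfl, rfl⟩
        simp at hc0
      have hcard := hweight s t hst
      have hpred : (Finset.univ.filter fun i : Fin l => (s • v + t • w) i = 0) =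
          (Finset.univ.filter fun i : Fin l =>
            s * fibMod p (i:ℕ) + t * fibMod p ((i:ℕ)+1) = 0) := by
        apply Finset.filter_congr
        intro i _
        simp [hvdef, hwdef]
      have htot := Finset.card_filter_add_card_filter_not
        (s := (Finset.univ : Finset (Fin l))) (fun i => (s • v + t • w) i = 0)
      rw [Finset.card_univ, Fintype.card_fin, hpred] at htot
      have hnv : hammingNorm (s • v + t • w) =
          (Finset.univ.filter fun i : Fin l => ¬ ((s • v + t • w) i = 0)).card := by
        simp only [hammingNorm, ne_eq]
      rw [hnv]
      omega
end

section
/- Let p be an odd prime such that the Pisano period l_p equals p−1 and β(p) = 4. Then the cyclic code C = ⟨f(x)⟩ of length p−1 over F_p generated by the Fibonacci polynomial f(x) has F_p-dimension 2 and minimum Hamming distance p−5. -/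
open Polynomial

/- ### Auxiliary lemmas -/

theorem fibShift {p : ℕ} {a b : ℕ} (h0 : fibMod p a = fibMod p b)
    (h1 : fibMod p (a+1) = fibMod p (b+1)) : ∀ n, fibMod p (a+n) = fibMod p (b+n)
  | 0 => h0
  | 1 => h1
  | n + 2 => by
    have e1 := fibShift h0 h1 (n+1)
    have e0 := fibShift h0 h1 n
    show fibMod p (a + (n+2)) = fibMod p (b + (n+2))
    have ha : a + (n+2) = (a+n) + 2 := by omega
    have hb : b + (n+2) = (b+n) + 2 := by omega
    rw [ha, hb]
    show fibMod p ((a+n)+1) + fibMod p (a+n) = fibMod p ((b+n)+1) + fibMod p (b+n)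
    rw [← Nat.add_assoc] at e1
    rw [e1, e0, ← Nat.add_assoc]

theorem fibMulAdd {p : ℕ} {l : ℕ} (hsh : ∀ n, fibMod p (l + n) = fibMod p n) :
    ∀ k r, fibMod p (l * k + r) = fibMod p r := by
  intro k
  induction k with
  | zero => simp
  | succ k ih =>
    intro r
    have e : l * (k+1) + r = l + (l * k + r) := by ring
    rw [e, hsh, ih]

theorem binetAux {p : ℕ} {α β : ZMod p} (hα : α^2 = α + 1) (hβ : β^2 = β + 1) :
    ∀ n, (α - β) * fibMod p n = α ^ n - β ^ n
  | 0 => by simp [fibMod]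
  | 1 => by simp [fibMod]
  | n + 2 => by
    have h1 := binetAux hα hβ (n+1)
    have h0 := binetAux hα hβ n
    show (α - β) * (fibMod p (n+1) + fibMod p n) = α ^ (n+2) - β ^ (n+2)
    linear_combination h1 + h0 - α^n * hα + β^n * hβ

theorem fib3fact : fibMod 3 2 = 1 := by decide
theorem fib5fact : fibMod 5 4 = 3 := by decide
theorem z35fact : (3 : ZMod 5) ≠ 0 := by decide
theorem odd2fact : ¬ Odd 2 := by decide
theorem np4fact : ¬ Nat.Prime 4 := by decide
theorem np6fact : ¬ Nat.Prime 6 := by decide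

theorem existsRoot (p : ℕ) [Fact p.Prime] (hp7 : 7 ≤ p)
    (hF0 : fibMod p (p-1) = 0) (hF2 : fibMod p (p-2) = 1) :
    ∃ a : ZMod p, a ^ 2 = a + 1 := by
  by_contra hno
  push_neg at hno
  set q : (ZMod p)[X] := X^2 - X - 1 with hq
  have hqdeg : q.natDegree = 2 := by
    rw [hq]; compute_degree!
  have hq0 : q ≠ 0 := fun h => by simp [h] at hqdeg
  have hirr : Irreducible q := by
    rw [Polynomial.irreducible_iff_roots_eq_zero_of_degree_le_three (by omega) (by omega)]
    rw [Multiset.eq_zero_iff_forall_notMem]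
    intro a ha
    rw [mem_roots hq0] at ha
    have : a^2 = a + 1 := by
      have := ha
      simp only [IsRoot, hq, eval_sub, eval_pow, eval_X, eval_one] at this
      linear_combination this
    exact hno a this
  haveI : Fact (Irreducible q) := ⟨hirr⟩
  set R := AdjoinRoot q
  set x : R := AdjoinRoot.root q with hx
  have hxsq : x ^ 2 = x + 1 := by
    have h : (AdjoinRoot.mk q) (X^2 - X - 1) = 0 := by rw [← hq]; exact AdjoinRoot.mk_self
    rw [map_sub, map_sub, map_pow, map_one, AdjoinRoot.mk_X] at h
    have h2 : x ^ 2 - x - 1 = 0 := h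
    linear_combination h2
  have hpow : ∀ n : ℕ, x ^ (n+1) =
      AdjoinRoot.of q (fibMod p (n+1)) * x + AdjoinRoot.of q (fibMod p n) := by
    intro n
    induction n with
    | zero => simp [fibMod]
    | succ n ih =>
      have e : x ^ (n+2) = x * x ^ (n+1) := by ring
      rw [e, ih]
      have hrec : fibMod p (n+2) = fibMod p (n+1) + fibMod p n := rfl
      rw [hrec, map_add]
      linear_combination (AdjoinRoot.of q (fibMod p (n+1))) * hxsq
  have hx1 : x ^ (p-1) = 1 := by
    have e : p - 1 = (p - 2) + 1 := by omega
    rw [e, hpow (p-2)]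
    have e2 : p - 2 + 1 = p - 1 := by omega
    rw [e2, hF0, hF2]
    simp
  set g : R[X] := X ^ (p-1) - 1 with hg
  have hgdeg : g.natDegree = p - 1 := by
    rw [hg, ← C_1, natDegree_X_pow_sub_C]
  have hg0 : g ≠ 0 := fun h => by rw [h, natDegree_zero] at hgdeg; omega
  have hinj : Function.Injective (AdjoinRoot.of q) := (AdjoinRoot.of q).injective
  set T0 : Finset R := (Finset.univ.filter (fun a : ZMod p => ¬ a = 0)).image (AdjoinRoot.of q)
    with hT0
  have hT0card : T0.card = p - 1 := by
    rw [hT0, Finset.card_image_of_injective _ hinj]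
    have h1 : (Finset.univ.filter (fun a : ZMod p => a = 0)).card
        + (Finset.univ.filter (fun a : ZMod p => ¬ a = 0)).card = p := by
      rw [Finset.card_filter_add_card_filter_not]
      simp [ZMod.card]
    have h2 : (Finset.univ.filter (fun a : ZMod p => a = 0)) = {0} := by
      ext a; simp
    rw [h2] at h1
    simp at h1
    omega
  have hxT0 : x ∉ T0 := by
    rw [hT0]
    simp only [Finset.mem_image, Finset.mem_filter, Finset.mem_univ, true_and]
    rintro ⟨a, ha0, hax⟩
    apply hno a
    apply hinj
    rw [map_pow, map_add, map_one, hax, hxsq]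
  have hroots : ∀ y ∈ insert x T0, y ∈ g.roots.toFinset := by
    intro y hy
    rw [Multiset.mem_toFinset, mem_roots hg0]
    simp only [IsRoot, hg, eval_sub, eval_pow, eval_X, eval_one, sub_eq_zero]
    rcases Finset.mem_insert.mp hy with h | h
    · rw [h, hx1]
    · rw [hT0] at h
      simp only [Finset.mem_image, Finset.mem_filter, Finset.mem_univ, true_and] at h
      obtain ⟨a, ha0, rfl⟩ := h
      rw [← map_pow, ZMod.pow_card_sub_one_eq_one ha0, map_one]
  have hcard : (insert x T0).card = p := by
    rw [Finset.card_insert_of_notMem hxT0, hT0card]; omega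
  have hle : (insert x T0).card ≤ g.roots.toFinset.card :=
    Finset.card_le_card hroots
  have hle2 : g.roots.toFinset.card ≤ Multiset.card g.roots := Multiset.toFinset_card_le _
  have hle3 : Multiset.card g.roots ≤ p - 1 := hgdeg ▸ g.card_roots'
  omega

theorem countPow {p l : ℕ} [Fact p.Prime] {γ : ZMod p} (hγ : γ ≠ 0) (e : ZMod p) :
    ((Finset.range l).filter fun i => γ ^ i = e).card ≤
      ((Finset.range l).filter fun i => γ ^ i = 1).card := by
  set S := (Finset.range l).filter (fun i => γ ^ i = e) with hS
  rcases S.eq_empty_or_nonempty with h | h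
  · simp [h]
  · set i0 := S.min' h with hi0
    have hi0S : i0 ∈ S := S.min'_mem h
    rw [hS, Finset.mem_filter, Finset.mem_range] at hi0S
    apply Finset.card_le_card_of_injOn (fun i => i - i0)
    · intro i hi
      simp only [Finset.mem_coe] at hi ⊢
      have hiS := hi
      rw [hS, Finset.mem_filter, Finset.mem_range] at hiS
      have hle : i0 ≤ i := Finset.min'_le _ _ hi
      rw [Finset.mem_filter, Finset.mem_range]
      constructor
      · omega
      · have hmul : γ ^ (i - i0) * γ ^ i0 = γ ^ i := by
          rw [← pow_add]; congr 1; omega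
        have h2 : γ ^ (i - i0) * γ ^ i0 = 1 * γ ^ i0 := by
          rw [hmul, one_mul, hiS.2, hi0S.2]
        exact mul_right_cancel₀ (pow_ne_zero _ hγ) h2
    · intro i hi j hj hij
      have h1 : i0 ≤ i := Finset.min'_le _ _ hi
      have h2 : i0 ≤ j := Finset.min'_le _ _ hj
      simp only at hij
      omega

/-- The shifted Fibonacci vector. -/
def sVec (p : ℕ) (m : ℕ) : Fin (p - 1) → ZMod p := fun i => fibMod p ((i : ℕ) + m)

theorem sVec_mem (p : ℕ) : ∀ m : ℕ,
    sVec p m ∈ Submodule.span (ZMod p) {sVec p 0, sVec p 1}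
  | 0 => Submodule.subset_span (by simp)
  | 1 => Submodule.subset_span (by simp)
  | m + 2 => by
    have h1 := sVec_mem p (m+1)
    have h0 := sVec_mem p m
    have he : sVec p (m+2) = sVec p (m+1) + sVec p m := by
      funext i
      show fibMod p ((i:ℕ) + (m+2)) = fibMod p ((i:ℕ) + (m+1)) + fibMod p ((i:ℕ)+m)
      have e : (i:ℕ) + (m + 2) = ((i:ℕ) + m) + 2 := by omega
      have e1 : (i:ℕ) + (m + 1) = ((i:ℕ) + m) + 1 := by omega
      rw [e, e1]
      rfl
    rw [he]
    exact Submodule.add_mem _ h1 h0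

/-- For an odd prime `p` with Pisano period `l_p = p - 1` and `β(p) = 4`,
the cyclic code `C = ⟨f(x)⟩` of length `p - 1` over `F_p` has dimension `2` and minimum
Hamming distance `p - 5`. -/
theorem fibCode_beta_four (p : ℕ) [Fact p.Prime] (hodd : Odd p)
    (hl : pisano p = p - 1) (hb : betaP p = 4) :
    Module.finrank (ZMod p) (fibCode p (p - 1)) = 2 ∧
      IsLeast {w : ℕ | ∃ v ∈ fibCode p (p - 1), v ≠ 0 ∧ hammingNorm v = w} (p - 5) := by
  have hp := Fact.out (p := p.Prime)
  have hp2 : 2 ≤ p := hp.two_le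
  -- the Pisano period really is a period
  have hne : {t : ℕ | 0 < t ∧ fibMod p t = 0 ∧ fibMod p (t + 1) = 1}.Nonempty := by
    by_contra h
    rw [Set.not_nonempty_iff_eq_empty] at h
    have h0 : pisano p = 0 := by rw [pisano, h, Nat.sInf_empty]
    omega
  have hmem : 0 < pisano p ∧ fibMod p (pisano p) = 0 ∧ fibMod p (pisano p + 1) = 1 :=
    Nat.sInf_mem hne
  rw [hl] at hmem
  obtain ⟨hl0, hF0, hFl1⟩ := hmem
  -- p ≥ 7
  have hp7 : 7 ≤ p := by
    by_contra hc
    push_neg at hc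
    interval_cases p
    · exact absurd hodd odd2fact
    · rw [show (3:ℕ) - 1 = 2 from rfl, fib3fact] at hF0
      exact one_ne_zero hF0
    · exact absurd hp np4fact
    · rw [show (5:ℕ) - 1 = 4 from rfl, fib5fact] at hF0
      exact z35fact hF0
    · exact absurd hp np6fact
  -- periodicity
  have hshift : ∀ n, fibMod p ((p-1) + n) = fibMod p n := by
    have h0 : fibMod p (p-1) = fibMod p 0 := by rw [hF0]; rfl
    have h1 : fibMod p ((p-1)+1) = fibMod p (0+1) := by rw [hFl1]; rfl
    intro n
    have := fibShift h0 h1 n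
    simpa using this
  have hmod : ∀ n, fibMod p n = fibMod p (n % (p-1)) := by
    intro n
    conv_lhs => rw [← Nat.div_add_mod n (p-1)]
    exact fibMulAdd hshift _ _
  -- F (p-2) = 1
  have hF2 : fibMod p (p-2) = 1 := by
    have hrec : fibMod p ((p-2)+2) = fibMod p ((p-2)+1) + fibMod p (p-2) := rfl
    have e1 : (p-2)+1 = p-1 := by omega
    have e2 : (p-2)+2 = (p-1)+1 := by omega
    rw [e2, e1, hFl1, hF0, zero_add] at hrec
    exact hrec.symm
  -- roots of x² = x + 1
  obtain ⟨α, hα⟩ := existsRoot p hp7 hF0 hF2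
  set β : ZMod p := 1 - α with hβdef
  have hβ : β^2 = β + 1 := by rw [hβdef]; linear_combination hα
  have hα0 : α ≠ 0 := by
    intro h; rw [h] at hα; simp at hα
  have hβ0 : β ≠ 0 := by
    intro h; rw [h] at hβ; simp at hβ
  have h5 : (5 : ZMod p) ≠ 0 := by
    intro h
    have h5' : ((5:ℕ) : ZMod p) = 0 := by exact_mod_cast h
    rw [ZMod.natCast_eq_zero_iff] at h5'
    have := Nat.le_of_dvd (by norm_num) h5'
    omega
  have hαβ : α - β ≠ 0 := by
    intro h
    apply h5
    have h2 : 2*α - 1 = 0 := by rw [hβdef] at h; linear_combination h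
    linear_combination (-4 : ZMod p)*hα + (2*α - 1)*h2
  set γ : ZMod p := α / β with hγdef
  have hγ0 : γ ≠ 0 := div_ne_zero hα0 hβ0
  have binet := binetAux hα hβ
  have hziff : ∀ i : ℕ, (fibMod p i = 0 ↔ γ ^ i = 1) := by
    intro i
    constructor
    · intro h
      have hbz := binet i
      rw [h, mul_zero] at hbz
      have heq : α ^ i = β ^ i := by linear_combination -hbz
      rw [hγdef, div_pow, heq, div_self (pow_ne_zero _ hβ0)]
    · intro h
      rw [hγdef, div_pow, div_eq_one_iff_eq (pow_ne_zero _ hβ0)] at h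
      have hbz := binet i
      rw [h, sub_self] at hbz
      exact (mul_eq_zero.mp hbz).resolve_left hαβ
  -- counting
  have hbb : ((Finset.range (p-1)).filter fun i => fibMod p i = 0).card = 4 := by
    rw [← hl]; exact hb
  have hcount1 : ((Finset.range (p-1)).filter fun i => γ ^ i = 1).card = 4 := by
    rw [← hbb]
    congr 1
    apply Finset.filter_congr
    intro i _
    rw [hziff i]
  have hcount : ∀ e : ZMod p,
      ((Finset.range (p-1)).filter fun i => γ ^ i = e).card ≤ 4 := by
    intro e
    rw [← hcount1]
    exact countPow hγ0 e
  -- the code is spanned by sVec 0 and sVec 1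
  have hpv : polyVec p (p-1) (fibPoly p) = sVec p 0 := by
    funext i
    show (fibPoly p).coeff i = fibMod p ((i:ℕ) + 0)
    rw [Nat.add_zero]
    have hi : (i:ℕ) ∈ Finset.range (pisano p) := by
      rw [hl]; exact Finset.mem_range.mpr i.isLt
    rw [fibPoly, finset_sum_coeff]
    simp only [coeff_C_mul, coeff_X_pow, mul_ite, mul_one, mul_zero]
    rw [Finset.sum_ite_eq (Finset.range (pisano p)) ((i:ℕ)) (fun j => fibMod p j), if_pos hi]
  have hsmod : ∀ m m', m % (p-1) = m' % (p-1) → sVec p m = sVec p m' := by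
    intro m m' h
    funext i
    show fibMod p ((i:ℕ)+m) = fibMod p ((i:ℕ)+m')
    rw [hmod ((i:ℕ)+m), hmod ((i:ℕ)+m'), Nat.add_mod, h, ← Nat.add_mod]
  have hsh : ∀ m, cyclicShift p (p-1) (sVec p m) = sVec p (m + (p-2)) := by
    intro m
    funext i
    show fibMod p ((((i:ℕ) + ((p-1) - 1)) % (p-1)) + m) = fibMod p ((i:ℕ) + (m + (p-2)))
    have e : (p-1) - 1 = p - 2 := by omega
    rw [e, hmod ((((i:ℕ) + (p-2)) % (p-1)) + m), hmod ((i:ℕ) + (m + (p-2))),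
      Nat.mod_add_mod]
    have e2 : (i:ℕ) + (p-2) + m = (i:ℕ) + (m + (p-2)) := by omega
    rw [e2]
  have hiter : ∀ k, (cyclicShift p (p-1))^[k] (polyVec p (p-1) (fibPoly p))
      = sVec p (k * (p-2)) := by
    intro k
    induction k with
    | zero => simpa using hpv
    | succ k ih =>
      rw [Function.iterate_succ_apply', ih, hsh]
      have e : k * (p-2) + (p-2) = (k+1) * (p-2) := by ring
      rw [e]
  have hcode : fibCode p (p-1) = Submodule.span (ZMod p) {sVec p 0, sVec p 1} := by
    apply le_antisymm
    · rw [fibCode, cyclicCode]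
      apply Submodule.span_le.mpr
      rintro w ⟨k, rfl⟩
      rw [hiter k]
      exact sVec_mem p (k * (p-2))
    · apply Submodule.span_le.mpr
      rintro w (rfl | rfl)
      · apply Submodule.subset_span
        exact ⟨0, by simpa using hpv.symm⟩
      · apply Submodule.subset_span
        refine ⟨p-2, ?_⟩
        rw [hiter (p-2)]
        apply hsmod
        have e : (p-2)*(p-2) = 1 + (p-3)*(p-1) := by
          obtain ⟨m, rfl⟩ : ∃ m, p = m + 7 := ⟨p - 7, by omega⟩
          have a1 : m+7-2 = m+5 := by omega
          have a2 : m+7-3 = m+4 := by omega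
          have a3 : m+7-1 = m+6 := by omega
          rw [a1, a2, a3]
          ring
        rw [e, Nat.add_mul_mod_self_right]
  -- small Fibonacci values
  have hf1 : fibMod p 1 = 1 := rfl
  have hf2' : fibMod p 2 = 1 := by
    show fibMod p 1 + fibMod p 0 = 1
    show (1 : ZMod p) + 0 = 1
    rw [add_zero]
  -- linear independence
  have hv1ne : sVec p 1 ≠ 0 := by
    intro h
    have h0 := congrFun h ⟨0, hl0⟩
    have : fibMod p (0 + 1) = 0 := h0
    rw [hf1] at this
    exact one_ne_zero this
  have hli : LinearIndependent (ZMod p) ![sVec p 0, sVec p 1] := by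
    rw [linearIndependent_fin2]
    constructor
    · simpa using hv1ne
    · intro a h
      simp only [Matrix.cons_val_zero, Matrix.cons_val_one, Matrix.head_cons] at h
      have h0 := congrFun h ⟨0, hl0⟩
      have h1 := congrFun h ⟨1, by omega⟩
      have e0 : a * fibMod p 1 = fibMod p 0 := h0
      have e1 : a * fibMod p 2 = fibMod p 1 := h1
      have hf0 : fibMod p 0 = 0 := rfl
      rw [hf1, mul_one, hf0] at e0
      rw [hf2', mul_one, hf1, e0] at e1
      exact one_ne_zero e1.symm
  have hrange : Set.range ![sVec p 0, sVec p 1] = {sVec p 0, sVec p 1} := by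
    ext w
    constructor
    · rintro ⟨j, rfl⟩
      fin_cases j
      · exact Or.inl rfl
      · exact Or.inr rfl
    · rintro (rfl | rfl)
      · exact ⟨0, rfl⟩
      · exact ⟨1, rfl⟩
  have hrank : Module.finrank (ZMod p) (fibCode p (p-1)) = 2 := by
    rw [hcode, ← hrange, finrank_span_eq_card hli]
    simp
  -- hamming norm computations
  have hhn : ∀ v : Fin (p-1) → ZMod p,
      hammingNorm v + (Finset.univ.filter fun i => v i = 0).card = p - 1 := by
    intro v
    have h := Finset.card_filter_add_card_filter_not
      (s := (Finset.univ : Finset (Fin (p-1)))) (p := fun i => v i = 0)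
    rw [Finset.card_univ, Fintype.card_fin] at h
    have h2 : hammingNorm v = (Finset.univ.filter fun i : Fin (p-1) => ¬ v i = 0).card := by
      simp [hammingNorm, ne_eq]
    omega
  -- zeros of codewords: at most 4
  have hzbound : ∀ a b : ZMod p, ¬(a = 0 ∧ b = 0) →
      (Finset.univ.filter fun i : Fin (p-1) =>
        a * fibMod p (i:ℕ) + b * fibMod p ((i:ℕ)+1) = 0).card ≤ 4 := by
    intro a b hab
    set c := a + b * α with hc
    set d := a + b * β with hd
    have hkey : ∀ i : ℕ,
        (a * fibMod p i + b * fibMod p (i+1) = 0 ↔ c * α ^ i = d * β ^ i) := by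
      intro i
      have hb0 := binet i
      have hb1 := binet (i+1)
      constructor
      · intro h
        have hz : c * α ^ i - d * β ^ i
            = (α - β) * (a * fibMod p i + b * fibMod p (i+1)) := by
          rw [hc, hd]; linear_combination (-a) * hb0 - b * hb1
        rw [h, mul_zero] at hz
        linear_combination hz
      · intro h
        have h2 : (α - β) * (a * fibMod p i + b * fibMod p (i+1)) = 0 := by
          rw [hc, hd] at h
          linear_combination a * hb0 + b * hb1 + h
        exact (mul_eq_zero.mp h2).resolve_left hαβ
    by_cases hc0 : c = 0
    · have hd0 : d ≠ 0 := by
        intro hd0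
        apply hab
        have hbz : b = 0 := by
          have hcd : c - d = b * (α - β) := by rw [hc, hd]; ring
          rw [hc0, hd0, sub_zero] at hcd
          exact (mul_eq_zero.mp hcd.symm).resolve_right hαβ
        constructor
        · have := hc0
          rw [hc, hbz, zero_mul, add_zero] at this
          exact this
        · exact hbz
      have hempty : (Finset.univ.filter fun i : Fin (p-1) =>
          a * fibMod p (i:ℕ) + b * fibMod p ((i:ℕ)+1) = 0) = ∅ := by
        rw [Finset.filter_eq_empty_iff]
        intro i _
        rw [hkey (i:ℕ), hc0, zero_mul]
        intro h
        exact (mul_ne_zero hd0 (pow_ne_zero _ hβ0)) h.symm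
      rw [hempty]
      simp
    · set e := d / c with he
      have hiff : ∀ i : ℕ, (c * α ^ i = d * β ^ i ↔ γ ^ i = e) := by
        intro i
        rw [hγdef, he, div_pow, div_eq_div_iff (pow_ne_zero _ hβ0) hc0]
        constructor <;> intro h <;> linear_combination h
      refine le_trans ?_ (hcount e)
      apply Finset.card_le_card_of_injOn (fun i : Fin (p-1) => (i:ℕ))
      · intro i hi
        simp only [Finset.mem_coe] at hi ⊢
        rw [Finset.mem_filter] at hi
        rw [Finset.mem_filter, Finset.mem_range]
        exact ⟨i.isLt, (hiff (i:ℕ)).mp ((hkey (i:ℕ)).mp hi.2)⟩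
      · intro i _ j _ h
        exact Fin.val_injective h
  -- codeword shape
  have hvfun : ∀ a b : ZMod p, ∀ i : Fin (p-1),
      (a • sVec p 0 + b • sVec p 1) i = a * fibMod p (i:ℕ) + b * fibMod p ((i:ℕ)+1) := by
    intro a b i
    show a * sVec p 0 i + b * sVec p 1 i = _
    show a * fibMod p ((i:ℕ)+0) + b * fibMod p ((i:ℕ)+1) = _
    rw [Nat.add_zero]
  -- lower bound for all nonzero codewords
  have hlower : ∀ v ∈ fibCode p (p-1), v ≠ 0 → p - 5 ≤ hammingNorm v := by
    intro v hv hvne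
    rw [hcode, Submodule.mem_span_pair] at hv
    obtain ⟨a, b, rfl⟩ := hv
    have hab : ¬ (a = 0 ∧ b = 0) := by
      rintro ⟨rfl, rfl⟩
      simp at hvne
    have hz := hzbound a b hab
    have hh := hhn (a • sVec p 0 + b • sVec p 1)
    have hfe : (Finset.univ.filter fun i : Fin (p-1) => (a • sVec p 0 + b • sVec p 1) i = 0)
        = (Finset.univ.filter fun i : Fin (p-1) =>
            a * fibMod p (i:ℕ) + b * fibMod p ((i:ℕ)+1) = 0) := by
      apply Finset.filter_congr
      intro i _
      rw [hvfun a b i]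
    rw [hfe] at hh
    omega
  -- exact weight of sVec 0
  have hzcard0 : (Finset.univ.filter fun i : Fin (p-1) => fibMod p (i:ℕ) = 0).card = 4 := by
    rw [← hbb]
    apply Finset.card_bij (fun (i : Fin (p-1)) _ => (i:ℕ))
    · intro i hi
      rw [Finset.mem_filter] at hi
      exact Finset.mem_filter.mpr ⟨Finset.mem_range.mpr i.isLt, hi.2⟩
    · intro i _ j _ h
      exact Fin.val_injective h
    · intro j hj
      rw [Finset.mem_filter, Finset.mem_range] at hj
      exact ⟨⟨j, hj.1⟩, Finset.mem_filter.mpr ⟨Finset.mem_univ _, hj.2⟩, rfl⟩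
  have hwt0 : hammingNorm (sVec p 0) = p - 5 := by
    have hh := hhn (sVec p 0)
    have hfe : (Finset.univ.filter fun i : Fin (p-1) => sVec p 0 i = 0)
        = (Finset.univ.filter fun i : Fin (p-1) => fibMod p (i:ℕ) = 0) := by
      apply Finset.filter_congr
      intro i _
      show (fibMod p ((i:ℕ)+0) = 0) ↔ _
      rw [Nat.add_zero]
    rw [hfe, hzcard0] at hh
    omega
  have hv0mem : sVec p 0 ∈ fibCode p (p-1) := by
    rw [hcode]
    exact Submodule.subset_span (Or.inl rfl)
  have hv0ne : sVec p 0 ≠ 0 := by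
    intro h
    have h1 := congrFun h ⟨1, by omega⟩
    have : fibMod p (1 + 0) = 0 := h1
    rw [Nat.add_zero, hf1] at this
    exact one_ne_zero this
  refine ⟨hrank, ⟨sVec p 0, hv0mem, hv0ne, hwt0⟩, ?_⟩
  rintro w ⟨v, hv, hvne, rfl⟩
  exact hlower v hv hvne
end

section
/- Let p be an odd prime such that the Pisano period l_p equals 2p+2 and β(p) ∈ {2, 4}. Then the cyclic code C = ⟨f(x)⟩ of length 2p+2 over F_p generated by the Fibonacci polynomial f(x) has F_p-dimension 2 and minimum Hamming distance 2p+2−β(p), i.e. C is a linear code of type [2p+2, 2, 2p+2−β(p)] over F_p. -/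
open Polynomial

lemma fibMod_eq_fib (p : ℕ) : ∀ n, fibMod p n = (Nat.fib n : ZMod p)
  | 0 => by simp [fibMod]
  | 1 => by simp [fibMod]
  | n+2 => by
    rw [fibMod_add_two, fibMod_eq_fib p (n+1), fibMod_eq_fib p n, Nat.fib_add_two]
    push_cast; ring

lemma fib_docagne (k : ℕ) : ∀ i : ℕ,
    (Nat.fib (i+k) : ℤ) * Nat.fib (i+1) - Nat.fib i * Nat.fib (i+k+1) = (-1)^i * Nat.fib k
  | 0 => by simp
  | i+1 => by
    have IH := fib_docagne k i
    have h1 : (Nat.fib (i+2) : ℤ) = Nat.fib i + Nat.fib (i+1) := by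
      rw [Nat.fib_add_two]; push_cast; ring
    have h2 : (Nat.fib (i+k+2) : ℤ) = Nat.fib (i+k) + Nat.fib (i+k+1) := by
      rw [Nat.fib_add_two]; push_cast; ring
    rw [show i+1+k = i+k+1 from by omega, show i+1+1 = i+2 from rfl,
      show i+k+1+1 = i+k+2 from rfl, h1, h2]
    linear_combination (-1 : ℤ) * IH

lemma fib_per (p L : ℕ) (hF0 : fibMod p L = 0) (hF1 : fibMod p (L+1) = 1) :
    ∀ n, fibMod p (n + L) = fibMod p n := by
  have key : ∀ n, fibMod p (n + L) = fibMod p n ∧ fibMod p (n + 1 + L) = fibMod p (n+1) := by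
    intro n
    induction n with
    | zero =>
      refine ⟨by simpa [fibMod] using hF0, ?_⟩
      rw [show 0+1+L = L+1 from by omega, hF1]; simp [fibMod]
    | succ n ih =>
      refine ⟨ih.2, ?_⟩
      rw [show n+1+1+L = (n+L)+2 from by omega, fibMod_add_two,
        show n+L+1 = n+1+L from by omega, ih.1, ih.2, ← fibMod_add_two]
  exact fun n => (key n).1

lemma fib_mod_add (p L : ℕ) (hper : ∀ n, fibMod p (n + L) = fibMod p n)
    (x y : ℕ) : fibMod p (x % L + y) = fibMod p (x + y) := by
  have hq : ∀ q n, fibMod p (n + L * q) = fibMod p n := by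
    intro q
    induction q with
    | zero => simp
    | succ q ih =>
      intro n
      rw [show n + L*(q+1) = (n + L*q) + L from by ring, hper, ih]
  have hx := Nat.mod_add_div x L
  calc fibMod p (x % L + y) = fibMod p ((x % L + y) + L * (x / L)) := (hq _ _).symm
    _ = fibMod p (x + y) := by congr 1; omega


/-- For an odd prime `p` with Pisano period `l_p = 2p + 2` and
`β(p) ∈ {2, 4}`, the cyclic code `C = ⟨f(x)⟩` of length `2p + 2` over `F_p` has dimension
`2` and minimum Hamming distance `2p + 2 - β(p)`, i.e. `C` is a linear code of type
`[2p+2, 2, 2p+2-β(p)]` over `F_p`. -/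
theorem fibCode_long (p : ℕ) [Fact p.Prime] (hodd : Odd p)
    (hl : pisano p = 2 * p + 2) (hb : betaP p = 2 ∨ betaP p = 4) :
    Module.finrank (ZMod p) (fibCode p (2 * p + 2)) = 2 ∧
      IsLeast {w : ℕ | ∃ v ∈ fibCode p (2 * p + 2), v ≠ 0 ∧ hammingNorm v = w}
        (2 * p + 2 - betaP p) := by
  have hp : p.Prime := Fact.out
  have hp2 : 2 ≤ p := hp.two_le
  set L := 2 * p + 2 with hLdef
  -- pisano membership
  have hne : {t : ℕ | 0 < t ∧ fibMod p t = 0 ∧ fibMod p (t + 1) = 1}.Nonempty := by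
    by_contra h
    rw [Set.not_nonempty_iff_eq_empty] at h
    have h0 : pisano p = 0 := by unfold pisano; rw [h]; exact Nat.sInf_empty
    omega
  have hmem := Nat.sInf_mem hne
  rw [show sInf {t : ℕ | 0 < t ∧ fibMod p t = 0 ∧ fibMod p (t + 1) = 1} = pisano p from rfl,
    hl] at hmem
  simp only [Set.mem_setOf_eq] at hmem
  obtain ⟨-, hF0, hF1⟩ := hmem
  have hper : ∀ n, fibMod p (n + L) = fibMod p n := fib_per p L hF0 hF1
  have hmodadd : ∀ x y, fibMod p (x % L + y) = fibMod p (x + y) := fib_mod_add p L hper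
  have hFm : fibMod p (2*p+1) = 1 := by
    have h := fibMod_add_two p (2*p+1)
    rw [show 2*p+1+2 = L+1 from by omega, show 2*p+1+1 = L from by omega, hF0, hF1] at h
    simpa using h.symm
  set w0 : Fin L → ZMod p := fun i => fibMod p i.val with hw0
  set w1 : Fin L → ZMod p := fun i => fibMod p (i.val + (2*p+1)) with hw1
  have hvF : polyVec p L (fibPoly p) = w0 := by
    funext i
    show (fibPoly p).coeff i = fibMod p i.val
    rw [fibPoly, hl, Polynomial.finset_sum_coeff]
    simp only [Polynomial.coeff_C_mul, Polynomial.coeff_X_pow, mul_ite, mul_one, mul_zero]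
    rw [Finset.sum_ite_eq (Finset.range L) (i : ℕ) (fun j => fibMod p j)]
    simp [Finset.mem_range, i.isLt]
  have hiter : ∀ k (i : Fin L), (cyclicShift p L)^[k] (polyVec p L (fibPoly p)) i
      = fibMod p (i.val + k * (2*p+1)) := by
    intro k
    induction k with
    | zero => intro i; rw [Function.iterate_zero_apply, hvF, hw0]; simp
    | succ k ih =>
      intro i
      rw [Function.iterate_succ_apply']
      simp only [cyclicShift]
      rw [ih]
      rw [hmodadd]
      congr 1
      rw [show L - 1 = 2*p+1 from by omega]
      ring
  have hstep : ∀ n, fibMod p (n + 2*(2*p+1)) = fibMod p n - fibMod p (n + (2*p+1)) := by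
    intro n
    have h1 : fibMod p (n + 2*(2*p+1)) = fibMod p (n + 2*p) := by
      rw [show n + 2*(2*p+1) = (n + 2*p) + L from by omega, hper]
    have h2 := fibMod_add_two p (n + 2*p)
    rw [show n+2*p+2 = n + L from by omega, hper,
      show n+2*p+1 = n + (2*p+1) from by omega] at h2
    rw [h1]
    linear_combination -h2
  have hspan : fibCode p L = Submodule.span (ZMod p) {w0, w1} := by
    rw [fibCode, cyclicCode]
    apply le_antisymm
    · rw [Submodule.span_le]
      rintro w ⟨k, rfl⟩
      have key : ∀ k, ((cyclicShift p L)^[k] (polyVec p L (fibPoly p)) ∈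
            Submodule.span (ZMod p) ({w0, w1} : Set (Fin L → ZMod p))) ∧
          ((cyclicShift p L)^[k+1] (polyVec p L (fibPoly p)) ∈
            Submodule.span (ZMod p) ({w0, w1} : Set (Fin L → ZMod p))) := by
        intro k
        induction k with
        | zero =>
          constructor
          · have h : (cyclicShift p L)^[0] (polyVec p L (fibPoly p)) = w0 := by
              funext i; rw [hiter]; simp [hw0]
            rw [h]; exact Submodule.subset_span (Set.mem_insert _ _)
          · have h : (cyclicShift p L)^[1] (polyVec p L (fibPoly p)) = w1 := by
              funext i; rw [hiter]; simp [hw1]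
            rw [h]; exact Submodule.subset_span (Set.mem_insert_of_mem _ rfl)
        | succ k ih =>
          refine ⟨ih.2, ?_⟩
          have heq : (cyclicShift p L)^[k+2] (polyVec p L (fibPoly p))
              = (cyclicShift p L)^[k] (polyVec p L (fibPoly p))
                - (cyclicShift p L)^[k+1] (polyVec p L (fibPoly p)) := by
            funext i
            simp only [Pi.sub_apply]
            rw [hiter, hiter, hiter,
              show (i:ℕ) + (k+2)*(2*p+1) = ((i:ℕ) + k*(2*p+1)) + 2*(2*p+1) from by ring,
              hstep]
            congr 2
            ring
          rw [show k+1+1 = k+2 from rfl, heq]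
          exact Submodule.sub_mem _ ih.1 ih.2
      exact (key k).1
    · rw [Submodule.span_le]
      intro w hw
      apply Submodule.subset_span
      rcases hw with rfl | rfl
      · exact ⟨0, by funext i; rw [hiter]; simp [hw0]⟩
      · exact ⟨1, by funext i; rw [hiter]; simp [hw1]⟩
  have hindep : LinearIndependent (ZMod p) ![w0, w1] := by
    rw [LinearIndependent.pair_iff]
    intro s t hst
    have h0 := congrFun hst ⟨0, by omega⟩
    have h1 := congrFun hst ⟨1, by omega⟩
    simp only [Pi.add_apply, Pi.smul_apply, smul_eq_mul, Pi.zero_apply, hw0, hw1] at h0 h1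
    rw [show ((0:ℕ) + (2*p+1)) = 2*p+1 from by omega, hFm] at h0
    rw [show ((1:ℕ) + (2*p+1)) = L from by omega, hF0] at h1
    simp [fibMod] at h0 h1
    exact ⟨h1, h0⟩
  have hrange : Set.range ![w0, w1] = {w0, w1} := by
    ext x
    simp [Fin.exists_fin_two, eq_comm, or_comm]
  have hdim : Module.finrank (ZMod p) (fibCode p L) = 2 := by
    rw [hspan, ← hrange, finrank_span_eq_card hindep]
    simp
  have hbetaL : betaP p = ((Finset.range L).filter fun i => fibMod p i = 0).card := by
    rw [betaP, hl]
  -- counting lemma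
  have hcount : ∀ a b : ZMod p, ¬(a = 0 ∧ b = 0) →
      ((Finset.univ.filter fun i : Fin L =>
        a * fibMod p i.val + b * fibMod p (i.val + (2*p+1)) = 0)).card ≤ betaP p := by
    intro a b hab
    rw [hbetaL]
    set T := Finset.univ.filter fun i : Fin L =>
      a * fibMod p i.val + b * fibMod p (i.val + (2*p+1)) = 0 with hT
    rcases T.eq_empty_or_nonempty with h | h
    · simp [h]
    · set i0 := T.min' h with hi0
      have hi0T : i0 ∈ T := T.min'_mem h
      have Ei0 : a * fibMod p i0.val + b * fibMod p (i0.val + (2*p+1)) = 0 :=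
        (Finset.mem_filter.mp hi0T).2
      have hker : ∀ j ∈ T, fibMod p (j.val - i0.val) = 0 := by
        intro j hjT
        have hij : i0.val ≤ j.val := T.min'_le j hjT
        have Ej : a * fibMod p j.val + b * fibMod p (j.val + (2*p+1)) = 0 :=
          (Finset.mem_filter.mp hjT).2
        have hdet : fibMod p j.val * fibMod p (i0.val + (2*p+1))
            - fibMod p i0.val * fibMod p (j.val + (2*p+1)) = 0 := by
          by_cases ha : a = 0
          · have hbne : b ≠ 0 := fun hb' => hab ⟨ha, hb'⟩
            rw [ha] at Ei0 Ej
            simp only [zero_mul, zero_add] at Ei0 Ej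
            rw [mul_eq_zero] at Ei0 Ej
            rcases Ei0 with h' | h'
            · exact absurd h' hbne
            · rcases Ej with h'' | h''
              · exact absurd h'' hbne
              · rw [h', h'']; ring
          · have hadet : a * (fibMod p j.val * fibMod p (i0.val + (2*p+1))
                - fibMod p i0.val * fibMod p (j.val + (2*p+1))) = 0 := by
              linear_combination fibMod p (i0.val + (2*p+1)) * Ej
                - fibMod p (j.val + (2*p+1)) * Ei0
            exact (mul_eq_zero.mp hadet).resolve_left ha
        -- now evaluate the determinant
        set k := j.val - i0.val with hk
        have hjk : j.val = i0.val + k := by omega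
        rw [fibMod_eq_fib]
        have hsplit : ∀ n : ℕ, (Nat.fib (n + (2*p+1)) : ZMod p)
            = Nat.fib n * Nat.fib (2*p) + Nat.fib (n+1) * Nat.fib (2*p+1) := by
          intro n
          rw [show n + (2*p+1) = n + 2*p + 1 from by omega, Nat.fib_add]
          push_cast; ring
        have hdoc := fib_docagne k i0.val
        have hdocZ : (Nat.fib (i0.val+k) : ZMod p) * Nat.fib (i0.val+1)
            - Nat.fib i0.val * Nat.fib (i0.val+k+1) = (-1)^(i0.val) * Nat.fib k := by
          have := congrArg (fun z : ℤ => (z : ZMod p)) hdoc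
          push_cast at this
          exact this
        have hfibm : (Nat.fib (2*p+1) : ZMod p) = 1 := by rw [← fibMod_eq_fib]; exact hFm
        rw [fibMod_eq_fib, fibMod_eq_fib, fibMod_eq_fib, fibMod_eq_fib] at hdet
        rw [hjk] at hdet
        rw [hsplit (i0.val + k), hsplit i0.val] at hdet
        have hz : ((-1 : ZMod p))^(i0.val) * (Nat.fib k : ZMod p) = 0 := by
          linear_combination hdet - ((Nat.fib (i0.val+k) : ZMod p) * Nat.fib (i0.val+1)
            - (Nat.fib i0.val : ZMod p) * Nat.fib (i0.val+k+1)) * hfibm - hdocZ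
        have hneg : ((-1 : ZMod p))^(i0.val) ≠ 0 :=
          pow_ne_zero _ (neg_ne_zero.mpr one_ne_zero)
        exact (mul_eq_zero.mp hz).resolve_left hneg
      apply Finset.card_le_card_of_injOn (fun j => j.val - i0.val)
      · intro j hj
        rw [Finset.mem_coe, Finset.mem_filter, Finset.mem_range]
        exact ⟨lt_of_le_of_lt (Nat.sub_le _ _) j.isLt, hker j hj⟩
      · intro x hx y hy hxy
        have hx' : i0.val ≤ x.val := T.min'_le x hx
        have hy' : i0.val ≤ y.val := T.min'_le y hy
        simp only at hxy
        exact Fin.ext (by omega)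
  have hnorm : ∀ v : Fin L → ZMod p,
      hammingNorm v = L - (Finset.univ.filter fun i => v i = 0).card := by
    intro v
    have h := Finset.card_filter_add_card_filter_not
      (s := (Finset.univ : Finset (Fin L))) (p := fun i => v i = 0)
    have hcardu : (Finset.univ : Finset (Fin L)).card = L := by simp
    have h2 : hammingNorm v = (Finset.univ.filter fun i => ¬ (v i = 0)).card := by
      simp only [hammingNorm, ne_eq]
    omega
  have hw0zeros : (Finset.univ.filter fun i : Fin L => w0 i = 0).card = betaP p := by
    rw [hbetaL]
    apply Finset.card_bij (fun (i : Fin L) _ => i.val)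
    · intro a ha
      rw [Finset.mem_filter] at ha
      rw [Finset.mem_filter, Finset.mem_range]
      exact ⟨a.isLt, ha.2⟩
    · intro a _ b _ hab'
      exact Fin.ext hab'
    · intro b hb
      rw [Finset.mem_filter, Finset.mem_range] at hb
      exact ⟨⟨b, hb.1⟩, Finset.mem_filter.mpr ⟨Finset.mem_univ _, hb.2⟩, rfl⟩
  have hw0ne : w0 ≠ 0 := by
    intro h
    have h1 := congrFun h ⟨1, by omega⟩
    rw [hw0] at h1
    simp only [Pi.zero_apply] at h1
    have : (1 : ZMod p) = 0 := by simpa [fibMod] using h1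
    exact one_ne_zero this
  have hbLe : betaP p ≤ L := by
    rw [hbetaL]
    exact le_trans (Finset.card_filter_le _ _) (by simp)
  refine ⟨hdim, ⟨w0, ?_, hw0ne, ?_⟩, ?_⟩
  · rw [hspan]; exact Submodule.subset_span (Set.mem_insert _ _)
  · rw [hnorm w0, hw0zeros]
  · rintro w ⟨v, hv, hvne, rfl⟩
    rw [hspan, Submodule.mem_span_pair] at hv
    obtain ⟨a, b, hab⟩ := hv
    have habne : ¬ (a = 0 ∧ b = 0) := by
      rintro ⟨rfl, rfl⟩
      apply hvne; rw [← hab]; simp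
    have hzset : (Finset.univ.filter fun i : Fin L => v i = 0)
        = (Finset.univ.filter fun i : Fin L =>
            a * fibMod p i.val + b * fibMod p (i.val + (2*p+1)) = 0) := by
      apply Finset.filter_congr
      intro i _
      rw [← hab]
      simp [hw0, hw1]
    have hc := hcount a b habne
    rw [← hzset] at hc
    have hcle : (Finset.univ.filter fun i : Fin L => v i = 0).card ≤ L :=
      le_trans (Finset.card_filter_le _ _) (by simp)
    rw [hnorm v]
    omega
end

section
/- Let p be an odd prime with Pisano period l_p = p−1 and β(p) = 1, and let C = ⟨f(x)⟩ be the cyclic code of length p−1 over F_p generated by the Fibonacci polynomial f(x). Then the weight distribution of C is: A_0 = 1, A_{p−2} = (p−1)², A_{p−1} = 2(p−1), and A_w = 0 for all other weights w, where A_w denotes the number of codewords of C of Hamming weight w. -/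
open Polynomial

namespace FibAux

variable (p : ℕ)

lemma fibMod_add_two (n : ℕ) : fibMod p (n + 2) = fibMod p (n + 1) + fibMod p n := rfl

lemma fibMod_eq_fib (n : ℕ) : fibMod p n = (Nat.fib n : ZMod p) := by
  induction n using Nat.twoStepInduction with
  | zero => simp [fibMod]
  | one => simp [fibMod]
  | more n ih1 ih2 =>
    rw [fibMod_add_two, ih1, ih2, Nat.fib_add_two]
    push_cast
    ring

lemma fib_add_formula (m n : ℕ) :
    fibMod p (m + n + 1) =
      fibMod p (m + 1) * fibMod p (n + 1) + fibMod p m * fibMod p n := by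
  simp only [fibMod_eq_fib]
  rw [Nat.fib_add]
  push_cast
  ring

lemma fib_det (i m : ℕ) :
    fibMod p i * fibMod p (i + m + 1) - fibMod p (i + m) * fibMod p (i + 1)
      = (-1 : ZMod p) ^ (i + 1) * fibMod p m := by
  induction i with
  | zero =>
    show fibMod p 0 * _ - _ * fibMod p 1 = _
    simp [fibMod]
  | succ i ih =>
    have h1 : i + 1 + m + 1 = (i + m) + 2 := by omega
    have h3 : i + 1 + m = (i + m) + 1 := by omega
    rw [h1, h3, fibMod_add_two p (i + m), show i + 1 + 1 = i + 2 from rfl,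
      fibMod_add_two p i]
    linear_combination (-1 : ZMod p) * ih

lemma fib_period (l : ℕ) (h0 : fibMod p l = 0) (h1 : fibMod p (l + 1) = 1) :
    ∀ n, fibMod p (n + l) = fibMod p n := by
  have key : ∀ n, fibMod p (n + l) = fibMod p n ∧ fibMod p (n + 1 + l) = fibMod p (n + 1) := by
    intro n
    induction n with
    | zero =>
      refine ⟨by rw [Nat.zero_add]; exact h0, ?_⟩
      have e : 0 + 1 + l = l + 1 := by omega
      rw [e, h1]; rfl
    | succ n ih =>
      refine ⟨ih.2, ?_⟩
      have e : n + 1 + 1 + l = (n + l) + 2 := by omega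
      rw [e, fibMod_add_two]
      have e2 : n + l + 1 = n + 1 + l := by omega
      rw [e2, ih.1, ih.2]
      rfl
  exact fun n => (key n).1

lemma fib_period_mul (l : ℕ) (h0 : fibMod p l = 0) (h1 : fibMod p (l + 1) = 1) (k n : ℕ) :
    fibMod p (n + k * l) = fibMod p n := by
  induction k with
  | zero => simp
  | succ k ih =>
    have e : n + (k + 1) * l = (n + k * l) + l := by ring
    rw [e, fib_period p l h0 h1, ih]

lemma fib_mod_add (l : ℕ) (h0 : fibMod p l = 0) (h1 : fibMod p (l + 1) = 1) (n c : ℕ) :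
    fibMod p (n % l + c) = fibMod p (n + c) := by
  conv_rhs => rw [← Nat.mod_add_div' n l]
  rw [show n % l + n / l * l + c = (n % l + c) + (n / l) * l by ring,
    fib_period_mul p l h0 h1]

/-- The parametrization of the code. -/
def eMap (p l : ℕ) : ZMod p × ZMod p → (Fin l → ZMod p) :=
  fun ab i => ab.1 * fibMod p i.val + ab.2 * fibMod p (i.val + 1)

def c10v (p l : ℕ) : Fin l → ZMod p := fun i => fibMod p i.val
def c01v (p l : ℕ) : Fin l → ZMod p := fun i => fibMod p (i.val + 1)

lemma polyVec_fib (l : ℕ) (hpl : pisano p = l) :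
    polyVec p l (fibPoly p) = fun i : Fin l => fibMod p i.val := by
  funext i
  show (fibPoly p).coeff i.val = _
  rw [fibPoly, hpl, Polynomial.finset_sum_coeff]
  simp only [Polynomial.coeff_C_mul, Polynomial.coeff_X_pow, mul_ite, mul_one, mul_zero]
  rw [Finset.sum_ite_eq (Finset.range l) (i : ℕ) (fun j => fibMod p j)]
  simp [i.isLt]

lemma shift_iter (l : ℕ) (hpl : pisano p = l) (h0 : fibMod p l = 0)
    (h1 : fibMod p (l + 1) = 1) (k : ℕ) :
    (cyclicShift p l)^[k] (polyVec p l (fibPoly p))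
      = fun i : Fin l => fibMod p (i.val + k * (l - 1)) := by
  induction k with
  | zero => simpa using polyVec_fib p l hpl
  | succ k ih =>
    rw [Function.iterate_succ_apply', ih]
    funext i
    show fibMod p ((i.val + (l - 1)) % l + k * (l - 1)) = _
    rw [fib_mod_add p l h0 h1,
      show i.val + (l - 1) + k * (l - 1) = i.val + (k + 1) * (l - 1) by ring]

lemma code_eq_span (l : ℕ) (hl2 : 2 ≤ l) (hpl : pisano p = l) (h0 : fibMod p l = 0)
    (h1 : fibMod p (l + 1) = 1) :
    fibCode p l = Submodule.span (ZMod p) {c10v p l, c01v p l} := by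
  show cyclicCode p l (fibPoly p) = _
  rw [cyclicCode]
  apply le_antisymm
  · rw [Submodule.span_le]
    rintro w ⟨k, rfl⟩
    rw [shift_iter p l hpl h0 h1 k]
    match k with
    | 0 =>
      apply Submodule.subset_span
      have : (fun i : Fin l => fibMod p (i.val + 0 * (l - 1))) = c10v p l := by
        funext i; simp [c10v]
      rw [this]
      exact Set.mem_insert _ _
    | (k + 1) =>
      apply Submodule.mem_span_pair.mpr
      set m := (k + 1) * (l - 1) with hm
      have hm1 : 1 ≤ m := by
        have : 1 * 1 ≤ (k + 1) * (l - 1) := Nat.mul_le_mul (by omega) (by omega)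
        omega
      refine ⟨fibMod p (m - 1), fibMod p m, ?_⟩
      funext i
      simp only [Pi.add_apply, Pi.smul_apply, smul_eq_mul, c10v, c01v]
      have hadd := fib_add_formula p (m - 1) i.val
      rw [show m - 1 + 1 = m by omega, show m - 1 + i.val + 1 = i.val + m by omega] at hadd
      rw [hadd]
      ring
  · rw [Submodule.span_le]
    rintro w hw
    rcases hw with h | h
    · apply Submodule.subset_span
      refine ⟨0, ?_⟩
      rw [shift_iter p l hpl h0 h1 0, h]
      funext i; simp [c10v]
    · apply Submodule.subset_span
      refine ⟨l - 1, ?_⟩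
      rw [shift_iter p l hpl h0 h1 (l - 1)]
      rw [Set.mem_singleton_iff.mp h]
      funext i
      show fibMod p (i.val + 1) = fibMod p (i.val + (l - 1) * (l - 1))
      obtain ⟨a, rfl⟩ : ∃ a, l = a + 2 := ⟨l - 2, by omega⟩
      rw [show a + 2 - 1 = a + 1 from rfl,
        show i.val + (a + 1) * (a + 1) = (i.val + 1) + a * (a + 2) by ring,
        fib_period_mul p (a + 2) h0 h1]

lemma mem_fibCode (l : ℕ) (hl2 : 2 ≤ l) (hpl : pisano p = l) (h0 : fibMod p l = 0)
    (h1 : fibMod p (l + 1) = 1) (v : Fin l → ZMod p) :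
    v ∈ fibCode p l ↔ ∃ ab, eMap p l ab = v := by
  rw [code_eq_span p l hl2 hpl h0 h1, Submodule.mem_span_pair]
  constructor
  · rintro ⟨a, b, rfl⟩
    exact ⟨(a, b), by funext i; simp [eMap, c10v, c01v]⟩
  · rintro ⟨ab, rfl⟩
    exact ⟨ab.1, ab.2, by funext i; simp [eMap, c10v, c01v]⟩

lemma line_card {K : Type*} [Field K] [Fintype K] [DecidableEq K] (x y : K)
    (h : ¬(x = 0 ∧ y = 0)) :
    (Finset.univ.filter fun ab : K × K => ab ≠ 0 ∧ ab.1 * x + ab.2 * y = 0).card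
      = Fintype.card K - 1 := by
  have hcard : (Finset.univ.filter fun t : K => t ≠ 0).card = Fintype.card K - 1 := by
    rw [Finset.filter_ne' Finset.univ 0, Finset.card_erase_of_mem (Finset.mem_univ _),
      Finset.card_univ]
  rw [← hcard]
  refine (Finset.card_bij (fun t _ => (t * y, - t * x)) ?_ ?_ ?_).symm
  · intro t ht
    simp only [Finset.mem_filter, Finset.mem_univ, true_and] at ht ⊢
    refine ⟨?_, by ring⟩
    intro h0
    rw [Prod.ext_iff] at h0
    simp only [Prod.fst_zero, Prod.snd_zero] at h0
    have hy0 : y = 0 := by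
      rcases mul_eq_zero.mp h0.1 with h' | h' <;> [exact absurd h' ht; exact h']
    have hx0 : x = 0 := by
      rcases mul_eq_zero.mp h0.2 with h' | h' <;>
        [exact absurd (neg_eq_zero.mp h') ht; exact h']
    exact h ⟨hx0, hy0⟩
  · intro a _ b _ hab
    rw [Prod.ext_iff] at hab
    rcases not_and_or.mp h with hx | hy
    · exact neg_inj.mp (mul_right_cancel₀ hx hab.2)
    · exact mul_right_cancel₀ hy hab.1
  · intro ab hab
    simp only [Finset.mem_filter, Finset.mem_univ, true_and] at hab
    obtain ⟨hne, heq⟩ := hab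
    by_cases hx : x = 0
    · have hy : y ≠ 0 := fun hy => h ⟨hx, hy⟩
      have hb : ab.2 = 0 := by
        have : ab.2 * y = 0 := by rw [hx] at heq; simpa using heq
        rcases mul_eq_zero.mp this with h' | h' <;> [exact h'; exact absurd h' hy]
      have ha : ab.1 ≠ 0 := by
        intro h'
        exact hne (Prod.ext h' hb)
      refine ⟨ab.1 / y, ?_, ?_⟩
      · simp only [Finset.mem_filter, Finset.mem_univ, true_and]
        exact div_ne_zero ha hy
      · apply Prod.ext
        · show ab.1 / y * y = ab.1
          exact div_mul_cancel₀ _ hy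
        · show -(ab.1 / y) * x = ab.2
          rw [hx, mul_zero, hb]
    · refine ⟨-(ab.2 / x), ?_, ?_⟩
      · simp only [Finset.mem_filter, Finset.mem_univ, true_and]
        intro h0
        apply hne
        have hb2 : ab.2 = 0 := by
          have := neg_eq_zero.mp h0
          rcases div_eq_zero_iff.mp this with h' | h' <;> [exact h'; exact absurd h' hx]
        have ha2 : ab.1 = 0 := by
          have : ab.1 * x = 0 := by rw [hb2] at heq; simpa using heq
          rcases mul_eq_zero.mp this with h' | h' <;> [exact h'; exact absurd h' hx]
        exact Prod.ext ha2 hb2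
      · apply Prod.ext
        · show -(ab.2 / x) * y = ab.1
          field_simp
          linear_combination -heq
        · show - (-(ab.2 / x)) * x = ab.2
          field_simp

end FibAux

open FibAux in
/-- Weight distribution for `l_p = p - 1`, `β(p) = 1`:
`A_0 = 1`, `A_{p-2} = (p-1)²`, `A_{p-1} = 2(p-1)`, and `A_w = 0` otherwise. -/
theorem fibCode_weight_distribution_beta_one (p : ℕ) [Fact p.Prime] (hodd : Odd p)
    (hl : pisano p = p - 1) (hb : betaP p = 1) :
    Set.ncard {v | v ∈ fibCode p (p - 1) ∧ hammingNorm v = 0} = 1 ∧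
      Set.ncard {v | v ∈ fibCode p (p - 1) ∧ hammingNorm v = p - 2} = (p - 1) ^ 2 ∧
      Set.ncard {v | v ∈ fibCode p (p - 1) ∧ hammingNorm v = p - 1} = 2 * (p - 1) ∧
      ∀ w : ℕ, w ≠ 0 → w ≠ p - 2 → w ≠ p - 1 →
        Set.ncard {v | v ∈ fibCode p (p - 1) ∧ hammingNorm v = w} = 0 := by
  have hp : p.Prime := Fact.out
  have hpne2 : p ≠ 2 := by rintro rfl; exact (by decide : ¬ Odd 2) hodd
  have hp3 : 3 ≤ p := by
    have := hp.two_le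
    omega
  set l := p - 1 with hldef
  have hl2 : 2 ≤ l := by omega
  -- Pisano facts
  have hpis : fibMod p l = 0 ∧ fibMod p (l + 1) = 1 := by
    have hne : {t : ℕ | 0 < t ∧ fibMod p t = 0 ∧ fibMod p (t + 1) = 1}.Nonempty := by
      by_contra hc
      rw [Set.not_nonempty_iff_eq_empty] at hc
      have : pisano p = 0 := by rw [pisano, hc]; exact Nat.sInf_empty
      omega
    have hmem : pisano p ∈ {t : ℕ | 0 < t ∧ fibMod p t = 0 ∧ fibMod p (t + 1) = 1} :=
      Nat.sInf_mem hne
    rw [hl] at hmem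
    exact ⟨hmem.2.1, hmem.2.2⟩
  have hbz : ∀ i, i < l → fibMod p i = 0 → i = 0 := by
    intro i hi hz
    obtain ⟨a, ha⟩ := Finset.card_eq_one.mp hb
    have h0mem : 0 ∈ (Finset.range (pisano p)).filter fun j => fibMod p j = 0 := by
      rw [Finset.mem_filter, Finset.mem_range, hl]
      exact ⟨by omega, rfl⟩
    have himem : i ∈ (Finset.range (pisano p)).filter fun j => fibMod p j = 0 := by
      rw [Finset.mem_filter, Finset.mem_range, hl]
      exact ⟨hi, hz⟩
    rw [ha, Finset.mem_singleton] at h0mem himem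
    omega
  have hnz : ∀ i, 0 < i → i < l → fibMod p i ≠ 0 := by
    intro i h1 h2 h3
    have := hbz i h2 h3
    omega
  have hmem : ∀ v : Fin l → ZMod p, v ∈ fibCode p l ↔ ∃ ab, eMap p l ab = v :=
    mem_fibCode p l hl2 hl hpis.1 hpis.2
  have hinj : Function.Injective (eMap p l) := by
    intro ab ab' h
    have h0 : ab.1 * fibMod p 0 + ab.2 * fibMod p 1
        = ab'.1 * fibMod p 0 + ab'.2 * fibMod p 1 := congrFun h ⟨0, by omega⟩
    have h1 : ab.1 * fibMod p (l - 1) + ab.2 * fibMod p (l - 1 + 1)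
        = ab'.1 * fibMod p (l - 1) + ab'.2 * fibMod p (l - 1 + 1) :=
      congrFun h ⟨l - 1, by omega⟩
    have hF0 : fibMod p 0 = 0 := rfl
    have hF1 : fibMod p 1 = 1 := rfl
    simp only [hF0, hF1, mul_zero, mul_one, zero_add] at h0
    have hFl : fibMod p (l - 1 + 1) = 0 := by rw [show l - 1 + 1 = l by omega, hpis.1]
    rw [hFl, mul_zero, mul_zero, add_zero, add_zero] at h1
    have hFlm : fibMod p (l - 1) ≠ 0 := hnz (l - 1) (by omega) (by omega)
    exact Prod.ext (mul_right_cancel₀ hFlm h1) h0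
  have hZle : ∀ ab : ZMod p × ZMod p, ab ≠ 0 → ∀ i j : Fin l,
      eMap p l ab i = 0 → eMap p l ab j = 0 → i = j := by
    have key : ∀ ab : ZMod p × ZMod p, ab ≠ 0 → ∀ i j : Fin l, i.val < j.val →
        eMap p l ab i = 0 → eMap p l ab j = 0 → False := by
      intro ab hab i j hij hi hj
      obtain ⟨m, hm⟩ : ∃ m, j.val = i.val + (m + 1) := ⟨j.val - i.val - 1, by omega⟩
      have hdet := fib_det p i.val (m + 1)
      rw [show i.val + (m + 1) = j.val by omega] at hdet
      have hFm : fibMod p (m + 1) ≠ 0 := hnz (m + 1) (by omega) (by have := j.isLt; omega)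
      have hsgn : (-1 : ZMod p) ^ (i.val + 1) ≠ 0 :=
        pow_ne_zero _ (by simpa using (neg_ne_zero.mpr (one_ne_zero (α := ZMod p))))
      have hdet0 : fibMod p i.val * fibMod p (j.val + 1)
          - fibMod p j.val * fibMod p (i.val + 1) ≠ 0 := by
        rw [hdet]
        exact mul_ne_zero hsgn hFm
      have hi' : ab.1 * fibMod p i.val + ab.2 * fibMod p (i.val + 1) = 0 := hi
      have hj' : ab.1 * fibMod p j.val + ab.2 * fibMod p (j.val + 1) = 0 := hj
      have hA : ab.1 = 0 := by
        have hc : ab.1 * (fibMod p i.val * fibMod p (j.val + 1)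
            - fibMod p j.val * fibMod p (i.val + 1)) = 0 := by
          linear_combination fibMod p (j.val + 1) * hi' - fibMod p (i.val + 1) * hj'
        rcases mul_eq_zero.mp hc with h' | h' <;> [exact h'; exact absurd h' hdet0]
      have hB : ab.2 = 0 := by
        have hc : ab.2 * (fibMod p i.val * fibMod p (j.val + 1)
            - fibMod p j.val * fibMod p (i.val + 1)) = 0 := by
          linear_combination fibMod p i.val * hj' - fibMod p j.val * hi'
        rcases mul_eq_zero.mp hc with h' | h' <;> [exact h'; exact absurd h' hdet0]
      exact hab (Prod.ext hA hB)
    intro ab hab i j hi hj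
    by_contra hne
    rcases Nat.lt_trichotomy i.val j.val with h | h | h
    · exact key ab hab i j h hi hj
    · exact hne (Fin.ext h)
    · exact key ab hab j i h hj hi
  have hnormZ : ∀ ab, hammingNorm (eMap p l ab)
      + (Finset.univ.filter fun i => eMap p l ab i = 0).card = l := by
    intro ab
    have h := Finset.card_filter_add_card_filter_not
      (s := (Finset.univ : Finset (Fin l))) (p := fun i => eMap p l ab i ≠ 0)
    simp only [hammingNorm, not_not, Finset.card_univ, Fintype.card_fin] at h ⊢
    exact h
  have hZ1 : ∀ ab : ZMod p × ZMod p, ab ≠ 0 →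
      (Finset.univ.filter fun i => eMap p l ab i = 0).card ≤ 1 := by
    intro ab hab
    apply Finset.card_le_one.mpr
    intro i hi j hj
    rw [Finset.mem_filter] at hi hj
    exact hZle ab hab i j hi.2 hj.2
  have hE0 : eMap p l (0 : ZMod p × ZMod p) = 0 := by
    funext i; simp [eMap]
  have hnorm0 : hammingNorm (eMap p l (0 : ZMod p × ZMod p)) = 0 := by
    rw [hE0]
    exact hammingNorm_eq_zero.mpr rfl
  have hncard : ∀ w, {v | v ∈ fibCode p l ∧ hammingNorm v = w}.ncard
      = (Finset.univ.filter
          fun ab : ZMod p × ZMod p => hammingNorm (eMap p l ab) = w).card := by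
    intro w
    have hset : {v | v ∈ fibCode p l ∧ hammingNorm v = w}
        = eMap p l '' {ab | hammingNorm (eMap p l ab) = w} := by
      ext v
      simp only [Set.mem_setOf_eq, Set.mem_image]
      constructor
      · rintro ⟨hv, hw⟩
        obtain ⟨ab, rfl⟩ := (hmem v).mp hv
        exact ⟨ab, hw, rfl⟩
      · rintro ⟨ab, hw, rfl⟩
        exact ⟨(hmem _).mpr ⟨ab, rfl⟩, hw⟩
    rw [hset, Set.ncard_image_of_injective _ hinj]
    have hco : {ab : ZMod p × ZMod p | hammingNorm (eMap p l ab) = w}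
        = ↑(Finset.univ.filter
            fun ab : ZMod p × ZMod p => hammingNorm (eMap p l ab) = w) := by
      ext ab; simp
    rw [hco, Set.ncard_coe_finset]
  have hline : ∀ i : Fin l,
      (Finset.univ.filter
        fun ab : ZMod p × ZMod p => ab ≠ 0 ∧ eMap p l ab i = 0).card = p - 1 := by
    intro i
    have hxy : ¬(fibMod p i.val = 0 ∧ fibMod p (i.val + 1) = 0) := by
      rintro ⟨h1, h2⟩
      have h3 := hbz i.val i.isLt h1
      rw [h3] at h2
      exact one_ne_zero (α := ZMod p) h2
    have hlc := line_card (K := ZMod p) (fibMod p i.val) (fibMod p (i.val + 1)) hxy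
    rw [ZMod.card] at hlc
    exact hlc
  have hcount1 : (Finset.univ.filter
      fun ab : ZMod p × ZMod p => ab ≠ 0 ∧ ∃ i, eMap p l ab i = 0).card = (p - 1) ^ 2 := by
    have hbu : (Finset.univ.filter
          fun ab : ZMod p × ZMod p => ab ≠ 0 ∧ ∃ i, eMap p l ab i = 0)
        = Finset.univ.biUnion (fun i : Fin l =>
            Finset.univ.filter fun ab : ZMod p × ZMod p => ab ≠ 0 ∧ eMap p l ab i = 0) := by
      ext ab
      simp only [Finset.mem_filter, Finset.mem_univ, true_and, Finset.mem_biUnion]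
      tauto
    rw [hbu, Finset.card_biUnion]
    · rw [Finset.sum_congr rfl fun i _ => hline i, Finset.sum_const, Finset.card_univ,
        Fintype.card_fin, smul_eq_mul]
      rw [show l = p - 1 from hldef, sq]
    · intro i _ j _ hij
      rw [Function.onFun, Finset.disjoint_left]
      intro ab hai haj
      rw [Finset.mem_filter] at hai haj
      exact hij (hZle ab hai.2.1 i j hai.2.2 haj.2.2)
  refine ⟨?_, ?_, ?_, ?_⟩
  · rw [hncard 0]
    have hsing : (Finset.univ.filter
        fun ab : ZMod p × ZMod p => hammingNorm (eMap p l ab) = 0) = {0} := by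
      ext ab
      simp only [Finset.mem_filter, Finset.mem_univ, true_and, Finset.mem_singleton]
      constructor
      · intro h
        have h2 : eMap p l ab = 0 := hammingNorm_eq_zero.mp h
        exact hinj (h2.trans hE0.symm)
      · rintro rfl; exact hnorm0
    rw [hsing, Finset.card_singleton]
  · rw [hncard (p - 2)]
    have heq : (Finset.univ.filter
          fun ab : ZMod p × ZMod p => hammingNorm (eMap p l ab) = p - 2)
        = Finset.univ.filter
            fun ab : ZMod p × ZMod p => ab ≠ 0 ∧ ∃ i, eMap p l ab i = 0 := by
      ext ab
      simp only [Finset.mem_filter, Finset.mem_univ, true_and]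
      constructor
      · intro h
        have hab : ab ≠ 0 := by rintro rfl; rw [hnorm0] at h; omega
        refine ⟨hab, ?_⟩
        by_contra hno
        push_neg at hno
        have hz : (Finset.univ.filter fun i => eMap p l ab i = 0) = ∅ :=
          Finset.filter_eq_empty_iff.mpr (fun i _ => hno i)
        have hnn := hnormZ ab
        rw [hz, Finset.card_empty] at hnn
        omega
      · rintro ⟨hab, i, hi⟩
        have hge : 1 ≤ (Finset.univ.filter fun i => eMap p l ab i = 0).card :=
          Finset.card_pos.mpr ⟨i, Finset.mem_filter.mpr ⟨Finset.mem_univ i, hi⟩⟩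
        have hle := hZ1 ab hab
        have hnn := hnormZ ab
        omega
    rw [heq, hcount1]
  · rw [hncard (p - 1)]
    have hpart := Finset.card_filter_add_card_filter_not
      (s := Finset.univ.filter fun ab : ZMod p × ZMod p => ab ≠ 0)
      (p := fun ab : ZMod p × ZMod p => ∃ i, eMap p l ab i = 0)
    rw [Finset.filter_filter, Finset.filter_filter] at hpart
    have hs : (Finset.univ.filter fun ab : ZMod p × ZMod p => ab ≠ 0).card = p ^ 2 - 1 := by
      rw [Finset.filter_ne' Finset.univ 0, Finset.card_erase_of_mem (Finset.mem_univ _),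
        Finset.card_univ, Fintype.card_prod, ZMod.card, sq]
    have heq : (Finset.univ.filter
          fun ab : ZMod p × ZMod p => hammingNorm (eMap p l ab) = p - 1)
        = Finset.univ.filter
            fun ab : ZMod p × ZMod p => ab ≠ 0 ∧ ¬∃ i, eMap p l ab i = 0 := by
      ext ab
      simp only [Finset.mem_filter, Finset.mem_univ, true_and]
      constructor
      · intro h
        have hab : ab ≠ 0 := by rintro rfl; rw [hnorm0] at h; omega
        refine ⟨hab, ?_⟩
        rintro ⟨i, hi⟩
        have hge : 1 ≤ (Finset.univ.filter fun i => eMap p l ab i = 0).card :=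
          Finset.card_pos.mpr ⟨i, Finset.mem_filter.mpr ⟨Finset.mem_univ i, hi⟩⟩
        have hle := hZ1 ab hab
        have hnn := hnormZ ab
        omega
      · rintro ⟨hab, hno⟩
        push_neg at hno
        have hz : (Finset.univ.filter fun i => eMap p l ab i = 0) = ∅ :=
          Finset.filter_eq_empty_iff.mpr (fun i _ => hno i)
        have hnn := hnormZ ab
        rw [hz, Finset.card_empty] at hnn
        omega
    rw [heq]
    have harith : p ^ 2 - 1 = (p - 1) ^ 2 + 2 * (p - 1) := by
      obtain ⟨a, rfl⟩ : ∃ a, p = a + 3 := ⟨p - 3, by omega⟩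
      have h1 : (a + 3) ^ 2 = ((a + 3 - 1) ^ 2 + 2 * (a + 3 - 1)) + 1 := by
        rw [show a + 3 - 1 = a + 2 from rfl]; ring
      rw [h1]
      exact Nat.add_sub_cancel _ _
    rw [hcount1, hs, harith] at hpart
    exact Nat.add_left_cancel hpart
  · intro w hw0 hw2 hw1
    rw [hncard w, Finset.card_eq_zero]
    apply Finset.filter_eq_empty_iff.mpr
    intro ab _
    by_cases hab : ab = 0
    · rw [hab, hnorm0]; omega
    · have hle := hZ1 ab hab
      have hnn := hnormZ ab
      intro h
      omega
end

section
/- Let p be an odd prime with Pisano period l_p = p−1 and β(p) = 2, and let C = ⟨f(x)⟩ be the cyclic code of length p−1 over F_p generated by the Fibonacci polynomial f(x). Then the weight distribution of C is: A_0 = 1, A_{p−3} = (p−1)²/2, A_{p−1} = (p−1)(p+3)/2, and A_w = 0 for all other weights w, where A_w denotes the number of codewords of C of Hamming weight w. -/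
open Polynomial

-- auxiliary lemmas

lemma fib3_ne : ¬ (fibMod 3 (3 - 1) = 0) := by decide

lemma fib5_ne : ¬ (fibMod 5 (5 - 1) = 0) := by decide

lemma binetAux_s10 {R : Type*} [CommRing R] (G : ℕ → R) (h0 : G 0 = 0) (h1 : G 1 = 1)
    (hrec : ∀ n, G (n + 2) = G (n + 1) + G n) (a b : R) (ha : a ^ 2 = a + 1)
    (hb : b ^ 2 = b + 1) : ∀ n, G n * (a - b) = a ^ n - b ^ n := by
  have key : ∀ n, G n * (a - b) = a ^ n - b ^ n ∧ G (n+1) * (a - b) = a ^ (n+1) - b ^ (n+1) := by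
    intro n
    induction n with
    | zero => simp [h0, h1]
    | succ m ih =>
      refine ⟨ih.2, ?_⟩
      rw [hrec]
      have h' : (G (m+1) + G m) * (a - b) = (a^(m+1) - b^(m+1)) + (a^m - b^m) := by
        rw [add_mul, ih.1, ih.2]
      rw [h']
      have ha' : a ^ (m+2) = a^m * (a+1) := by rw [← ha]; ring
      have hb' : b ^ (m+2) = b^m * (b+1) := by rw [← hb]; ring
      rw [ha', hb']
      ring
  exact fun n => (key n).1


lemma exists_alpha (p : ℕ) [Fact p.Prime] (h2 : (2 : ZMod p) ≠ 0) (h5 : (5 : ZMod p) ≠ 0)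
    (hF : fibMod p (p - 1) = 0) (hF1 : fibMod p p = 1) : ∃ a : ZMod p, a ^ 2 = a + 1 := by
  have hp2 : 2 ≤ p := (Fact.out : p.Prime).two_le
  by_cases hsq : ∃ b : ZMod p, b ^ 2 = 5
  · obtain ⟨b, hb⟩ := hsq
    refine ⟨(1 + b) / 2, ?_⟩
    field_simp
    linear_combination hb
  · have hirr : Irreducible (X ^ 2 - C (5 : ZMod p)) := by
      apply X_pow_sub_C_irreducible_of_prime Nat.prime_two
      intro b hb
      exact hsq ⟨b, hb⟩
    haveI := Fact.mk hirr
    set K := AdjoinRoot (X ^ 2 - C (5 : ZMod p)) with hK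
    let φ : ZMod p →+* K := algebraMap (ZMod p) K
    have hφinj : Function.Injective φ := φ.injective
    set r : K := AdjoinRoot.root (X ^ 2 - C (5 : ZMod p)) with hr
    have h5K : φ 5 = (5 : K) := by simp [map_ofNat]
    have h2K : (2 : K) ≠ 0 := by
      have : φ 2 = (2 : K) := by simp [map_ofNat]
      rw [← this]
      simpa using fun h => h2 (hφinj (by simpa using h))
    have hr2 : r ^ 2 = (5 : K) := by
      have h0 := AdjoinRoot.eval₂_root (X ^ 2 - C (5 : ZMod p))
      simp only [eval₂_sub, eval₂_X_pow, eval₂_C, sub_eq_zero] at h0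
      rw [h0, ← h5K]
      rfl
    have hrne : r ≠ 0 := by
      intro h
      rw [h] at hr2
      exact h5 (hφinj (by rw [h5K, map_zero]; exact hr2.symm ▸ by norm_num))
    set A : K := (1 + r) / 2 with hA
    set B : K := 1 - A with hB
    have hA2 : A ^ 2 = A + 1 := by
      rw [hA]
      rw [div_pow, div_add_one h2K, div_eq_div_iff (pow_ne_zero 2 h2K) h2K]
      linear_combination 2 * hr2
    have hB2 : B ^ 2 = B + 1 := by rw [hB]; linear_combination hA2
    have hABr : A - B = r := by
      rw [hB, hA]
      have h2c : (1 + r) / 2 * 2 = 1 + r := div_mul_cancel₀ _ h2K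
      linear_combination h2c
    have hbin := binetAux_s10 (fun n => φ (fibMod p n)) (by simp [fibMod]) (by simp [fibMod])
      (fun n => by simp [fibMod]) A B hA2 hB2
    have hl0 : φ (fibMod p (p - 1)) * (A - B) = A ^ (p-1) - B ^ (p-1) := hbin (p - 1)
    rw [hF, map_zero, zero_mul] at hl0
    have hAB : A ^ (p-1) = B ^ (p-1) := sub_eq_zero.mp hl0.symm
    have hpp : p - 1 + 1 = p := by omega
    have hF1' : fibMod p (p - 1 + 1) = 1 := by rw [hpp]; exact hF1
    have hl1 : φ (fibMod p (p - 1 + 1)) * (A - B) = A ^ (p-1+1) - B ^ (p-1+1) := hbin (p - 1 + 1)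
    rw [hF1', map_one, one_mul, hABr] at hl1
    have hA1 : A ^ (p - 1) = 1 := by
      have hstep : A ^ (p-1) * r = 1 * r := by
        rw [one_mul, ← hABr]
        linear_combination -hl1 - B * hAB - (1 + r) * (inv_mul_cancel₀ h2K)
      exact mul_right_cancel₀ hrne hstep
    -- roots argument
    set P : K[X] := X ^ (p - 1) - C 1 with hP
    have hPne : P ≠ 0 := X_pow_sub_C_ne_zero (by omega) 1
    have hdeg : P.natDegree = p - 1 := natDegree_X_pow_sub_C
    have hcard : P.roots.toFinset.card ≤ p - 1 :=
      le_trans (Multiset.toFinset_card_le _) (le_trans (card_roots' P) (le_of_eq hdeg))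
    set img : Finset K := Finset.univ.image (fun u : (ZMod p)ˣ => φ (u : ZMod p)) with himg
    have himgsub : img ⊆ P.roots.toFinset := by
      intro x hx
      simp only [himg, Finset.mem_image, Finset.mem_univ, true_and] at hx
      obtain ⟨u, rfl⟩ := hx
      rw [Multiset.mem_toFinset, mem_roots hPne]
      have hu : (u : ZMod p) ^ (p - 1) = 1 := ZMod.pow_card_sub_one_eq_one u.ne_zero
      simp [hP, IsRoot, eval_sub, eval_pow, eval_X, eval_C, ← map_pow, hu]
    have himgcard : img.card = p - 1 := by
      rw [himg, Finset.card_image_of_injective _ (fun a b hab => Units.ext (hφinj hab)),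
        Finset.card_univ, ZMod.card_units]
    have himgeq : img = P.roots.toFinset :=
      Finset.eq_of_subset_of_card_le himgsub (by rw [himgcard]; exact hcard)
    have hAroot : A ∈ P.roots.toFinset := by
      rw [Multiset.mem_toFinset, mem_roots hPne]
      simp [hP, IsRoot, hA1]
    rw [← himgeq] at hAroot
    simp only [himg, Finset.mem_image, Finset.mem_univ, true_and] at hAroot
    obtain ⟨u, hu⟩ := hAroot
    have hrval : r = φ (2 * (u : ZMod p) - 1) := by
      have h2' : φ 2 = (2:K) := by simp [map_ofNat]
      rw [map_sub, map_mul, map_one, h2', hu, ← hABr, hB]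
      ring
    have h5eq : (2 * (u : ZMod p) - 1) ^ 2 = 5 := by
      apply hφinj
      rw [map_pow, ← hrval, hr2, h5K]
    exact absurd ⟨_, h5eq⟩ hsq


lemma pow_mod_of_pow_eq_one {M : Type*} [Monoid M] (a : M) {l : ℕ} (h : a ^ l = 1) (m : ℕ) :
    a ^ (m % l) = a ^ m := by
  conv_rhs => rw [← Nat.div_add_mod m l]
  rw [pow_add, pow_mul, h, one_pow, one_mul]

lemma card_filter_dvd (d l : ℕ) (hd : 0 < d) (hdl : d ∣ l) :
    ((Finset.range l).filter (fun i => d ∣ i)).card = l / d := by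
  have hld : d * (l / d) = l := Nat.mul_div_cancel' hdl
  have himg : (Finset.range l).filter (fun i => d ∣ i) =
      (Finset.range (l / d)).image (fun j => d * j) := by
    ext i
    simp only [Finset.mem_filter, Finset.mem_range, Finset.mem_image]
    constructor
    · rintro ⟨hil, j, rfl⟩
      refine ⟨j, ?_, rfl⟩
      by_contra hjl
      push_neg at hjl
      have : d * (l / d) ≤ d * j := Nat.mul_le_mul_left d hjl
      omega
    · rintro ⟨j, hj, rfl⟩
      refine ⟨?_, j, rfl⟩
      have : d * j < d * (l / d) := by exact Nat.mul_lt_mul_left hd |>.mpr hj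
      omega
  rw [himg, Finset.card_image_of_injective _ (fun a b hab => Nat.eq_of_mul_eq_mul_left hd hab),
    Finset.card_range]

noncomputable def phiMap (p l : ℕ) (a b : ZMod p) :
    (ZMod p × ZMod p) →ₗ[ZMod p] (Fin l → ZMod p) where
  toFun st := fun i => st.1 * a ^ (i : ℕ) + st.2 * b ^ (i : ℕ)
  map_add' st st' := by funext i; simp; ring
  map_smul' c st := by funext i; simp; ring

lemma phiMap_apply (p l : ℕ) (a b : ZMod p) (s t : ZMod p) (i : Fin l) :
    phiMap p l a b (s, t) i = s * a ^ (i : ℕ) + t * b ^ (i : ℕ) := rfl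

lemma phiMap_shift (p l : ℕ) (hl : 0 < l) (a b : ZMod p) (ha : a ^ l = 1) (hb : b ^ l = 1)
    (s t : ZMod p) :
    cyclicShift p l (phiMap p l a b (s, t)) = phiMap p l a b (a ^ (l-1) * s, b ^ (l-1) * t) := by
  funext i
  show phiMap p l a b (s, t) ⟨((i : ℕ) + (l - 1)) % l, Nat.mod_lt _ i.pos⟩ = _
  rw [phiMap_apply, phiMap_apply]
  have key : ∀ c : ZMod p, c ^ l = 1 → c ^ (((i : ℕ) + (l - 1)) % l) = c ^ (l-1) * c ^ (i : ℕ) := by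
    intro c hc
    rw [pow_mod_of_pow_eq_one c hc, pow_add, mul_comm]
  rw [key a ha, key b hb]
  ring

lemma phiMap_iterate (p l : ℕ) (hl : 0 < l) (a b : ZMod p) (ha : a ^ l = 1) (hb : b ^ l = 1)
    (s t : ZMod p) (k : ℕ) :
    (cyclicShift p l)^[k] (phiMap p l a b (s, t)) =
      phiMap p l a b ((a ^ (l-1)) ^ k * s, (b ^ (l-1)) ^ k * t) := by
  induction k with
  | zero => simp
  | succ m ih =>
    rw [Function.iterate_succ_apply', ih, phiMap_shift p l hl a b ha hb]
    congr 1
    simp only [Prod.mk.injEq]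
    constructor <;> ring

lemma phiMap_injective (p l : ℕ) [Fact p.Prime] (hl : 1 < l) (a b : ZMod p) (hab : a - b ≠ 0) :
    Function.Injective (phiMap p l a b) := by
  intro st st' h
  have h0 := congrFun h (⟨0, by omega⟩ : Fin l)
  have h1 := congrFun h (⟨1, by omega⟩ : Fin l)
  have e0 : st.1 + st.2 = st'.1 + st'.2 := by
    have := h0
    simp only [phiMap] at this
    simpa using this
  have e1 : st.1 * a + st.2 * b = st'.1 * a + st'.2 * b := by
    have := h1
    simp only [phiMap] at this
    simpa using this
  have hs : st.1 = st'.1 := by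
    have hz : (st.1 - st'.1) * (a - b) = 0 := by linear_combination e1 - b * e0
    exact sub_eq_zero.mp ((mul_eq_zero.mp hz).resolve_right hab)
  have ht : st.2 = st'.2 := by
    have := e0
    rw [hs] at this
    exact add_left_cancel this
  exact Prod.ext hs ht

lemma fibCode_eq_range (p : ℕ) [Fact p.Prime] (l : ℕ) (hl : pisano p = l) (hl6 : 6 ≤ l)
    (α β : ZMod p) (hαβ : α - β ≠ 0) (hα0 : α ≠ 0) (hβ0 : β ≠ 0)
    (hαl : α ^ l = 1) (hβl : β ^ l = 1)
    (hbin : ∀ n, fibMod p n * (α - β) = α ^ n - β ^ n) :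
    fibCode p l = LinearMap.range (phiMap p l α β) := by
  have hlpos : 0 < l := by omega
  have hc : (α - β)⁻¹ ≠ 0 := inv_ne_zero hαβ
  have hF : ∀ i : ℕ, fibMod p i = (α-β)⁻¹ * α^i + (-(α-β)⁻¹) * β^i := by
    intro i
    field_simp
    linear_combination hbin i
  have hpv : polyVec p l (fibPoly p) = phiMap p l α β ((α-β)⁻¹, -(α-β)⁻¹) := by
    funext i
    rw [phiMap_apply]
    show (fibPoly p).coeff i = _
    rw [fibPoly, hl, finset_sum_coeff]
    simp only [coeff_C_mul, coeff_X_pow, mul_ite, mul_one, mul_zero]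
    rw [Finset.sum_ite_eq (Finset.range l) ((i : ℕ)) (fun k => fibMod p k)]
    simp only [Finset.mem_range, i.isLt, if_true]
    exact hF i
  apply le_antisymm
  · refine Submodule.span_le.mpr ?_
    rintro w ⟨k, rfl⟩
    rw [hpv, phiMap_iterate p l hlpos α β hαl hβl]
    exact LinearMap.mem_range_self _ _
  · rintro w hw
    obtain ⟨st, rfl⟩ := hw
    set c := (α-β)⁻¹ with hcdef
    set u := α^(l-1) with hudef
    set v := β^(l-1) with hvdef
    have hu : u * α = 1 := by rw [hudef, ← pow_succ, show l-1+1 = l from by omega, hαl]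
    have hv : v * β = 1 := by rw [hvdef, ← pow_succ, show l-1+1 = l from by omega, hβl]
    have huv : u - v ≠ 0 := by
      refine sub_ne_zero.mpr (fun h => hαβ (sub_eq_zero.mpr ?_))
      calc α = (v*β)*α := by rw [hv, one_mul]
        _ = v*(β*α) := by ring
        _ = u*(β*α) := by rw [h]
        _ = (u*α)*β := by ring
        _ = β := by rw [hu, one_mul]
    set y := (st.1 + st.2) * (c * (u - v))⁻¹ with hydef
    set x := (st.1 - y * (u * c)) * c⁻¹ with hxdef
    have hcomp : st = x • ((c, -c) : ZMod p × ZMod p) + y • (u * c, v * -c) := by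
      have h1 : st.1 = x * c + y * (u*c) := by
        rw [hxdef]
        field_simp
        ring
      have h2 : st.2 = x * (-c) + y * (v * -c) := by
        rw [hxdef, hydef]
        field_simp
        ring_nf
      rw [Prod.ext_iff]
      exact ⟨h1, h2⟩
    have m0 : phiMap p l α β (c, -c) ∈ fibCode p l :=
      Submodule.subset_span ⟨0, by rw [Function.iterate_zero_apply, hpv]⟩
    have m1 : phiMap p l α β (u * c, v * -c) ∈ fibCode p l :=
      Submodule.subset_span ⟨1, by
        rw [Function.iterate_one, hpv, phiMap_shift p l hlpos α β hαl hβl]⟩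
    rw [show phiMap p l α β st = x • phiMap p l α β (c,-c) + y • phiMap p l α β (u*c, v*-c) from
      by rw [← map_smul, ← map_smul, ← map_add, ← hcomp]]
    exact Submodule.add_mem _ (Submodule.smul_mem _ x m0) (Submodule.smul_mem _ y m1)

lemma hammingNorm_eq_card (p l : ℕ) (v : Fin l → ZMod p) :
    hammingNorm v = (Finset.univ.filter (fun i => ¬ (v i = 0))).card := rfl

lemma weight_full_left (p l : ℕ) [Fact p.Prime] (α β : ZMod p) (hα0 : α ≠ 0) (s : ZMod p)
    (hs : s ≠ 0) : hammingNorm (phiMap p l α β (s, 0)) = l := by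
  rw [hammingNorm_eq_card]
  have : (Finset.univ.filter (fun i => ¬ (phiMap p l α β (s, 0) i = 0))) = Finset.univ := by
    refine Finset.filter_true_of_mem ?_
    intro i _
    rw [phiMap_apply]
    simp only [zero_mul, add_zero]
    exact mul_ne_zero hs (pow_ne_zero _ hα0)
  rw [this, Finset.card_univ, Fintype.card_fin]

lemma weight_full_right (p l : ℕ) [Fact p.Prime] (α β : ZMod p) (hβ0 : β ≠ 0) (t : ZMod p)
    (ht : t ≠ 0) : hammingNorm (phiMap p l α β (0, t)) = l := by
  rw [hammingNorm_eq_card]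
  have : (Finset.univ.filter (fun i => ¬ (phiMap p l α β (0, t) i = 0))) = Finset.univ := by
    refine Finset.filter_true_of_mem ?_
    intro i _
    rw [phiMap_apply]
    simp only [zero_mul, zero_add]
    exact mul_ne_zero ht (pow_ne_zero _ hβ0)
  rw [this, Finset.card_univ, Fintype.card_fin]

lemma phi_entry_zero_iff (p l : ℕ) [Fact p.Prime] (α β s t : ZMod p) (hβ0 : β ≠ 0)
    (hs : s ≠ 0) (i : Fin l) :
    phiMap p l α β (s, t) i = 0 ↔ t = -(s * (α * β⁻¹) ^ (i : ℕ)) := by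
  rw [phiMap_apply, mul_pow, inv_pow]
  have hβi : β ^ (i : ℕ) ≠ 0 := pow_ne_zero _ hβ0
  constructor
  · intro h
    field_simp
    linear_combination h
  · intro h
    rw [h]
    field_simp
    ring

lemma weight_no_zeros (p l : ℕ) [Fact p.Prime] (α β s t : ZMod p) (hβ0 : β ≠ 0) (hs : s ≠ 0)
    (hnex : ¬ ∃ j : ℕ, t = -(s * (α * β⁻¹) ^ j)) :
    hammingNorm (phiMap p l α β (s, t)) = l := by
  rw [hammingNorm_eq_card]
  have : (Finset.univ.filter (fun i => ¬ (phiMap p l α β (s, t) i = 0))) = Finset.univ := by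
    refine Finset.filter_true_of_mem ?_
    intro i _ h
    exact hnex ⟨(i : ℕ), (phi_entry_zero_iff p l α β s t hβ0 hs i).mp h⟩
  rw [this, Finset.card_univ, Fintype.card_fin]

lemma weight_two_zeros (p d : ℕ) [Fact p.Prime] (hd0 : 0 < d) (l : ℕ) (hl2 : l = 2*d)
    (α β : ZMod p)
    (hα0 : α ≠ 0) (hβ0 : β ≠ 0) (gd : (α * β⁻¹) ^ d = 1)
    (hmod : ∀ i j : ℕ, (α * β⁻¹) ^ i = (α * β⁻¹) ^ j ↔ i % d = j % d)
    (s t : ZMod p) (hs : s ≠ 0) (j : ℕ) (hj : t = -(s * (α * β⁻¹) ^ j)) :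
    hammingNorm (phiMap p l α β (s, t)) = l - 2 := by
  set g := α * β⁻¹ with hgdef
  set j' := j % d with hj'def
  have hj'd : j' < d := Nat.mod_lt _ hd0
  have hgj : g ^ j' = g ^ j := by
    rw [hmod]
    exact Nat.mod_mod_of_dvd j (dvd_refl d)
  have hiff : ∀ i : Fin l, (phiMap p l α β (s, t) i = 0) ↔ ((i:ℕ) = j' ∨ (i:ℕ) = j' + d) := by
    intro i
    rw [phi_entry_zero_iff p l α β s t hβ0 hs i, hj]
    constructor
    · intro h
      have hcanc : g ^ j = g ^ (i : ℕ) := mul_left_cancel₀ hs (neg_injective h)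
      have hm : j % d = (i : ℕ) % d := (hmod j (i:ℕ)).mp hcanc
      have hq := Nat.div_add_mod (i : ℕ) d
      have hiq : d * ((i:ℕ)/d) ≤ (i : ℕ) := by omega
      have hil : (i : ℕ) < 2*d := by have := i.isLt; omega
      have hqlt : (i:ℕ)/d < 2 := by
        by_contra hc
        push_neg at hc
        have h2 : d * 2 ≤ d * ((i:ℕ)/d) := Nat.mul_le_mul_left d hc
        omega
      interval_cases h : ((i:ℕ)/d) <;> omega
    · rintro (h | h)
      · rw [show ((i : ℕ)) = j' from h, hgj]
      · rw [show ((i : ℕ)) = j' + d from h, pow_add, gd, mul_one, hgj]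
  have hZ : (Finset.univ.filter (fun i : Fin l => phiMap p l α β (s, t) i = 0)) =
      {(⟨j', by omega⟩ : Fin l), ⟨j' + d, by omega⟩} := by
    ext i
    simp only [Finset.mem_filter, Finset.mem_univ, true_and, Finset.mem_insert,
      Finset.mem_singleton, hiff i, Fin.ext_iff]
  have hZcard : (Finset.univ.filter (fun i : Fin l => phiMap p l α β (s, t) i = 0)).card = 2 := by
    rw [hZ]
    exact Finset.card_pair (by simp [Fin.ext_iff]; omega)
  have hsplit := Finset.card_filter_add_card_filter_not
    (s := (Finset.univ : Finset (Fin l))) (p := fun i => phiMap p l α β (s, t) i = 0)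
  rw [hammingNorm_eq_card]
  rw [Finset.card_univ, Fintype.card_fin] at hsplit
  omega

lemma ncard_S2 (p d : ℕ) [Fact p.Prime] (hd0 : 0 < d) (g : ZMod p) (hg0 : g ≠ 0)
    (gd : g ^ d = 1) (hmod : ∀ i j : ℕ, g ^ i = g ^ j ↔ i % d = j % d) :
    {st : ZMod p × ZMod p | st.1 ≠ 0 ∧ ∃ j : ℕ, st.2 = -(st.1 * g ^ j)}.ncard = (p - 1) * d := by
  classical
  set H : Finset (ZMod p) := (Finset.range d).image (g ^ ·) with hH
  set B : Finset (ZMod p × ZMod p) := (Finset.univ.filter (fun x : ZMod p => x ≠ 0)) ×ˢ H with hB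
  set ψ : ZMod p × ZMod p → ZMod p × ZMod p := fun su => (su.1, -(su.1 * su.2)) with hψ
  have hseq : {st : ZMod p × ZMod p | st.1 ≠ 0 ∧ ∃ j : ℕ, st.2 = -(st.1 * g ^ j)} = ψ '' ↑B := by
    ext ⟨s, t⟩
    simp only [Set.mem_setOf_eq, Set.mem_image]
    constructor
    · rintro ⟨hs, j, ht⟩
      refine ⟨(s, g ^ (j % d)), ?_, ?_⟩
      · rw [Finset.mem_coe, hB, Finset.mem_product, Finset.mem_filter, hH, Finset.mem_image]
        exact ⟨⟨Finset.mem_univ _, hs⟩, ⟨j % d, Finset.mem_range.mpr (Nat.mod_lt _ hd0), rfl⟩⟩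
      · show (s, -(s * g ^ (j % d))) = (s, t)
        rw [Prod.mk.injEq]
        exact ⟨rfl, by rw [pow_mod_of_pow_eq_one g gd j, ← ht]⟩
    · rintro ⟨⟨s', u⟩, hmem, heq⟩
      rw [Finset.mem_coe, hB, Finset.mem_product, Finset.mem_filter, hH, Finset.mem_image] at hmem
      obtain ⟨⟨-, hs'⟩, j, -, rfl⟩ := hmem
      have heq' : (s', -(s' * g ^ j)) = (s, t) := heq
      rw [Prod.mk.injEq] at heq'
      obtain ⟨rfl, rfl⟩ := heq'
      exact ⟨hs', j, rfl⟩
  have hinj : Set.InjOn ψ ↑B := by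
    rintro ⟨s, u⟩ hsu ⟨s', u'⟩ hsu' heq
    simp only [hψ, Prod.mk.injEq] at heq
    obtain ⟨rfl, h2⟩ := heq
    rw [Finset.mem_coe, hB, Finset.mem_product, Finset.mem_filter] at hsu
    have hs0 : s ≠ 0 := hsu.1.2
    have hu' : u = u' := mul_left_cancel₀ hs0 (neg_injective h2)
    rw [hu']
  rw [hseq, Set.ncard_image_of_injOn hinj, Set.ncard_coe_finset, hB, Finset.card_product]
  have hc1 : (Finset.univ.filter (fun x : ZMod p => x ≠ 0)).card = p - 1 := by
    rw [Finset.filter_ne', Finset.card_erase_of_mem (Finset.mem_univ _), Finset.card_univ,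
      ZMod.card]
  have hc2 : H.card = d := by
    rw [hH, Finset.card_image_of_injOn, Finset.card_range]
    intro i hi j hj hij
    simp only [Finset.coe_range, Set.mem_Iio] at hi hj
    have := (hmod i j).mp hij
    rwa [Nat.mod_eq_of_lt hi, Nat.mod_eq_of_lt hj] at this
  rw [hc1, hc2]


/-- Weight distribution for `l_p = p - 1`, `β(p) = 2`:
`A_0 = 1`, `A_{p-3} = (p-1)²/2`, `A_{p-1} = (p-1)(p+3)/2`, and `A_w = 0` otherwise. -/
theorem fibCode_weight_distribution_beta_two (p : ℕ) [Fact p.Prime] (hodd : Odd p)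
    (hl : pisano p = p - 1) (hb : betaP p = 2) :
    Set.ncard {v | v ∈ fibCode p (p - 1) ∧ hammingNorm v = 0} = 1 ∧
      Set.ncard {v | v ∈ fibCode p (p - 1) ∧ hammingNorm v = p - 3} = (p - 1) ^ 2 / 2 ∧
      Set.ncard {v | v ∈ fibCode p (p - 1) ∧ hammingNorm v = p - 1}
        = (p - 1) * (p + 3) / 2 ∧
      ∀ w : ℕ, w ≠ 0 → w ≠ p - 3 → w ≠ p - 1 →
        Set.ncard {v | v ∈ fibCode p (p - 1) ∧ hammingNorm v = w} = 0 := by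
  have hp : p.Prime := Fact.out
  have hp2 : 2 ≤ p := hp.two_le
  -- the defining properties of the Pisano period
  have hne : {t : ℕ | 0 < t ∧ fibMod p t = 0 ∧ fibMod p (t + 1) = 1}.Nonempty := by
    by_contra h
    rw [Set.not_nonempty_iff_eq_empty] at h
    rw [pisano, h, Nat.sInf_empty] at hl
    omega
  have hmem : pisano p ∈ {t : ℕ | 0 < t ∧ fibMod p t = 0 ∧ fibMod p (t + 1) = 1} :=
    Nat.sInf_mem hne
  rw [hl] at hmem
  obtain ⟨hl0, hFl, hFl1⟩ := hmem
  -- p ≥ 7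
  have hoddm : p % 2 = 1 := Nat.odd_iff.mp hodd
  have hp3 : p ≠ 3 := by
    rintro rfl
    exact fib3_ne hFl
  have hp5 : p ≠ 5 := by
    rintro rfl
    exact fib5_ne hFl
  have hp7 : 7 ≤ p := by omega
  have h2 : (2 : ZMod p) ≠ 0 := by
    have h22 : ((2:ℕ) : ZMod p) ≠ 0 := by
      rw [Ne, ZMod.natCast_eq_zero_iff]
      intro hdvd
      have := Nat.le_of_dvd (by norm_num) hdvd
      omega
    simpa using h22
  have h5 : (5 : ZMod p) ≠ 0 := by
    have h55 : ((5:ℕ) : ZMod p) ≠ 0 := by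
      rw [Ne, ZMod.natCast_eq_zero_iff]
      intro hdvd
      have := Nat.le_of_dvd (by norm_num) hdvd
      omega
    simpa using h55
  have hFp : fibMod p p = 1 := by
    have hx := hFl1
    rwa [show p - 1 + 1 = p from by omega] at hx
  obtain ⟨α, hα⟩ := exists_alpha p h2 h5 hFl hFp
  set l := p - 1 with hldef
  set β := 1 - α with hβdef
  have hβ : β ^ 2 = β + 1 := by rw [hβdef]; linear_combination hα
  have hα0 : α ≠ 0 := by intro h; rw [h] at hα; norm_num at hα
  have hβ0 : β ≠ 0 := by intro h; rw [h] at hβ; norm_num at hβ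
  have hαβ : α ≠ β := by
    intro h
    apply h5
    have h2a : α + α = 1 := by
      have := h
      rw [hβdef] at this
      linear_combination this
    linear_combination (-4) * hα + (2*α - 1) * h2a
  have hd : α - β ≠ 0 := sub_ne_zero.mpr hαβ
  have hbin : ∀ n, fibMod p n * (α - β) = α ^ n - β ^ n :=
    binetAux_s10 (fibMod p) rfl rfl (fun n => rfl) α β hα hβ
  have hABl : α ^ l = β ^ l := by
    have hb' := hbin l
    rw [hFl, zero_mul] at hb'
    exact sub_eq_zero.mp hb'.symm
  have h1l : (α - β) = α ^ (l+1) - β ^ (l+1) := by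
    have hb' := hbin (l+1)
    rwa [hFl1, one_mul] at hb'
  have hαl : α ^ l = 1 :=
    mul_right_cancel₀ hd (by rw [one_mul]; linear_combination -h1l - β * hABl)
  have hβl : β ^ l = 1 := by rw [← hABl]; exact hαl
  have hg0 : α * β⁻¹ ≠ 0 := mul_ne_zero hα0 (inv_ne_zero hβ0)
  set gu : (ZMod p)ˣ := Units.mk0 α hα0 * (Units.mk0 β hβ0)⁻¹ with hgu
  have hguv : (gu : ZMod p) = α * β⁻¹ := by rw [hgu]; simp
  have hgupow : ∀ n : ℕ, ((gu ^ n : (ZMod p)ˣ) : ZMod p) = (α * β⁻¹) ^ n := by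
    intro n
    rw [Units.val_pow_eq_pow_val, hguv]
  set d := orderOf gu with hddef
  have hgul : gu ^ l = 1 := by
    apply Units.ext
    rw [hgupow, mul_pow, inv_pow, hαl, hβl, inv_one, mul_one, Units.val_one]
  have hdl : d ∣ l := orderOf_dvd_of_pow_eq_one hgul
  have hd0 : 0 < d := orderOf_pos gu
  have hmod : ∀ i j : ℕ, (α*β⁻¹)^i = (α*β⁻¹)^j ↔ i % d = j % d := by
    intro i j
    constructor
    · intro h
      have : gu ^ i = gu ^ j := Units.ext (by rw [hgupow, hgupow]; exact h)
      exact pow_inj_mod.mp this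
    · intro h
      have : gu ^ i = gu ^ j := pow_inj_mod.mpr h
      rw [← hgupow, ← hgupow, this]
  have hgd : (α*β⁻¹)^d = 1 := by
    rw [← hgupow, pow_orderOf_eq_one gu, Units.val_one]
  -- β(p) = 2 forces orderOf gu = l / 2
  have hziff : ∀ n : ℕ, fibMod p n = 0 ↔ d ∣ n := by
    intro n
    rw [orderOf_dvd_iff_pow_eq_one]
    constructor
    · intro h0
      have hb' := hbin n
      rw [h0, zero_mul] at hb'
      have hab : α ^ n = β ^ n := sub_eq_zero.mp hb'.symm
      apply Units.ext
      rw [hgupow, mul_pow, inv_pow, hab, mul_inv_cancel₀ (pow_ne_zero _ hβ0), Units.val_one]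
    · intro h1
      have hc : (α*β⁻¹) ^ n = 1 := by rw [← hgupow, h1, Units.val_one]
      rw [mul_pow, inv_pow] at hc
      have hab : α ^ n = β ^ n := by
        field_simp at hc
        exact hc
      have hb' := hbin n
      rw [hab, sub_self] at hb'
      exact (mul_eq_zero.mp hb').resolve_right hd
  have hbeta2 : l / d = 2 := by
    have hcongr : ((Finset.range l).filter (fun i => fibMod p i = 0)) =
        ((Finset.range l).filter (fun i => d ∣ i)) := by
      apply Finset.filter_congr
      intro i _
      simp [hziff i]
    have : betaP p = l / d := by
      rw [betaP, hl, hcongr, card_filter_dvd d l hd0 hdl]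
    omega
  have hl2 : l = 2 * d := by
    have hmul := Nat.mul_div_cancel' hdl
    rw [hbeta2] at hmul
    omega
  have hl6 : 6 ≤ l := by omega
  -- the code is the range of phiMap
  have hinj : Function.Injective (phiMap p l α β) := phiMap_injective p l (by omega) α β hd
  have hcode : fibCode p l = LinearMap.range (phiMap p l α β) :=
    fibCode_eq_range p l hl hl6 α β hd hα0 hβ0 hαl hβl hbin
  have hmemiff : ∀ v, v ∈ fibCode p l ↔ ∃ st, phiMap p l α β st = v := by
    intro v
    rw [hcode]
    exact ⟨fun h => h, fun h => h⟩
  -- weight trichotomy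
  have hw : ∀ s t : ZMod p,
      (s = 0 ∧ t = 0 ∧ hammingNorm (phiMap p l α β (s,t)) = 0) ∨
      ((s ≠ 0 ∧ ∃ j:ℕ, t = -(s * (α*β⁻¹)^j)) ∧ hammingNorm (phiMap p l α β (s,t)) = l - 2) ∨
      (¬(s = 0 ∧ t = 0) ∧ ¬(s ≠ 0 ∧ ∃ j:ℕ, t = -(s * (α*β⁻¹)^j)) ∧
        hammingNorm (phiMap p l α β (s,t)) = l) := by
    intro s t
    by_cases hs : s = 0
    · by_cases ht : t = 0
      · left
        refine ⟨hs, ht, ?_⟩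
        rw [hs, ht, show ((0,0) : ZMod p × ZMod p) = 0 from rfl, map_zero]
        simp [hammingNorm]
      · right; right
        refine ⟨fun h => ht h.2, fun h => h.1 hs, ?_⟩
        rw [hs]
        exact weight_full_right p l α β hβ0 t ht
    · by_cases hex : ∃ j:ℕ, t = -(s * (α*β⁻¹)^j)
      · right; left
        refine ⟨⟨hs, hex⟩, ?_⟩
        obtain ⟨j, hj⟩ := hex
        exact weight_two_zeros p d hd0 l hl2 α β hα0 hβ0 hgd hmod s t hs j hj
      · right; right
        exact ⟨fun h => hs h.1, fun h => hex h.2, weight_no_zeros p l α β s t hβ0 hs hex⟩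
  -- identification of the three point sets
  have hS : ∀ w, {v | v ∈ fibCode p l ∧ hammingNorm v = w} =
      phiMap p l α β '' {st | hammingNorm (phiMap p l α β st) = w} := by
    intro w
    ext v
    simp only [Set.mem_setOf_eq, Set.mem_image]
    constructor
    · rintro ⟨hv, hwv⟩
      obtain ⟨st, rfl⟩ := (hmemiff v).mp hv
      exact ⟨st, hwv, rfl⟩
    · rintro ⟨st, hwv, rfl⟩
      exact ⟨(hmemiff _).mpr ⟨st, rfl⟩, hwv⟩
  have hncard : ∀ w, {v | v ∈ fibCode p l ∧ hammingNorm v = w}.ncard =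
      {st | hammingNorm (phiMap p l α β st) = w}.ncard := by
    intro w
    rw [hS w, Set.ncard_image_of_injective _ hinj]
  have hT0 : {st : ZMod p × ZMod p | hammingNorm (phiMap p l α β st) = 0} = {0} := by
    ext st
    simp only [Set.mem_setOf_eq, Set.mem_singleton_iff]
    constructor
    · intro h
      exact hinj (by rw [hammingNorm_eq_zero.mp h, map_zero])
    · rintro rfl
      rw [map_zero]
      simp [hammingNorm]
  have hT2 : {st : ZMod p × ZMod p | hammingNorm (phiMap p l α β st) = l - 2} =
      {st : ZMod p × ZMod p | st.1 ≠ 0 ∧ ∃ j:ℕ, st.2 = -(st.1 * (α*β⁻¹)^j)} := by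
    ext ⟨s, t⟩
    simp only [Set.mem_setOf_eq]
    rcases hw s t with ⟨hs0, ht0, h0⟩ | ⟨hcond, h2'⟩ | ⟨hnz, hcond, hlval⟩
    · constructor
      · intro h; rw [h0] at h; omega
      · rintro ⟨hs, -⟩; exact absurd hs0 hs
    · constructor
      · intro _; exact hcond
      · intro _; exact h2'
    · constructor
      · intro h; rw [hlval] at h; omega
      · intro h; exact absurd h hcond
  have hTl : {st : ZMod p × ZMod p | hammingNorm (phiMap p l α β st) = l} =
      ({(0 : ZMod p × ZMod p)} ∪
        {st : ZMod p × ZMod p | st.1 ≠ 0 ∧ ∃ j:ℕ, st.2 = -(st.1 * (α*β⁻¹)^j)})ᶜ := by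
    ext ⟨s, t⟩
    simp only [Set.mem_setOf_eq, Set.mem_compl_iff, Set.mem_union, Set.mem_singleton_iff,
      Prod.mk_eq_zero, not_or]
    rcases hw s t with ⟨hs0, ht0, h0⟩ | ⟨hcond, h2'⟩ | ⟨hnz, hcond, hlval⟩
    · constructor
      · intro h; rw [h0] at h; omega
      · rintro ⟨hne0, -⟩; exact absurd ⟨hs0, ht0⟩ hne0
    · constructor
      · intro h; rw [h2'] at h; omega
      · rintro ⟨-, hnc⟩; exact absurd hcond hnc
    · constructor
      · intro _; exact ⟨fun h => hnz ⟨h.1, h.2⟩, hcond⟩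
      · intro _; exact hlval
  -- cardinalities
  have hcS2 := ncard_S2 p d hd0 (α*β⁻¹) hg0 hgd hmod
  have hctot : Nat.card (ZMod p × ZMod p) = p ^ 2 := by
    rw [Nat.card_eq_fintype_card, Fintype.card_prod, ZMod.card, sq]
  have hdisj : Disjoint {(0 : ZMod p × ZMod p)}
      {st : ZMod p × ZMod p | st.1 ≠ 0 ∧ ∃ j:ℕ, st.2 = -(st.1 * (α*β⁻¹)^j)} := by
    rw [Set.disjoint_singleton_left]
    rintro ⟨h1, -⟩
    exact h1 rfl
  have hcU : ({(0 : ZMod p × ZMod p)} ∪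
      {st : ZMod p × ZMod p | st.1 ≠ 0 ∧ ∃ j:ℕ, st.2 = -(st.1 * (α*β⁻¹)^j)}).ncard
      = 1 + (p-1) * d := by
    rw [Set.ncard_union_eq hdisj, Set.ncard_singleton, hcS2]
  have hcTl : (({(0 : ZMod p × ZMod p)} ∪
      {st : ZMod p × ZMod p | st.1 ≠ 0 ∧ ∃ j:ℕ, st.2 = -(st.1 * (α*β⁻¹)^j)})ᶜ).ncard
      = p ^ 2 - (1 + (p-1) * d) := by
    have hcompl := Set.ncard_add_ncard_compl ({(0 : ZMod p × ZMod p)} ∪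
      {st : ZMod p × ZMod p | st.1 ≠ 0 ∧ ∃ j:ℕ, st.2 = -(st.1 * (α*β⁻¹)^j)})
    rw [hcU, hctot] at hcompl
    omega
  have h2d : 2 ∣ p - 1 := by omega
  have hdval : (p - 1) / 2 = d := by omega
  refine ⟨?_, ?_, ?_, ?_⟩
  · rw [hncard 0, hT0, Set.ncard_singleton]
  · rw [show p - 3 = l - 2 from by omega, hncard, hT2, hcS2, sq,
      Nat.mul_div_assoc (p-1) h2d, hdval]
  · rw [hncard, hTl, hcTl, hldef]
    have h1 : p - 1 = 2*d := by omega
    rw [h1, show p + 3 = 2*(d+2) from by omega,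
      show 2*d*(2*(d+2)) = 2*(2*d*(d+2)) from by ring,
      Nat.mul_div_cancel_left _ (by norm_num : 0 < 2)]
    have hexp : p^2 = 2*d*(d+2) + (1 + 2*d*d) := by
      rw [show p = 2*d+1 from by omega]; ring
    omega
  · intro w hw0 hw2 hwl
    rw [hncard]
    have hempty : {st : ZMod p × ZMod p | hammingNorm (phiMap p l α β st) = w} = ∅ := by
      ext ⟨s, t⟩
      simp only [Set.mem_setOf_eq, Set.mem_empty_iff_false, iff_false]
      intro h
      have hlp : l = p - 1 := hldef
      rcases hw s t with ⟨-, -, h0⟩ | ⟨-, h2'⟩ | ⟨-, -, hlval⟩ <;> omega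
    rw [hempty, Set.ncard_empty]
end
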